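/- For any MAC W on finite alphabets, the capacity region with independent non-signaling assistance (shared only between each sender and the receiver separately) equals the unassisted capacity region: C^{NS_SR}(W) = C(W). -/

import Mathlib

open Finset Filter Topology

section Defs

variable {X1 X2 Y : Type*}

/-- The `n`-fold memoryless extension `W^{⊗n}` of a multiple-access channel `W`. -/
def macPow (n : ℕ) (W : X1 → X2 → Y → ℝ) :
    (Fin n → X1) → (Fin n → X2) → (Fin n → Y) → ℝ :=
  fun x1 x2 y => ∏ i, W (x1 i) (x2 i) (y i)

/-- `S(W,k1,k2)`: maximum joint success probability over classical (unassisted)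
stochastic encoders and decoder. -/
noncomputable def S [Fintype X1] [Fintype X2] [Fintype Y]
    (W : X1 → X2 → Y → ℝ) (k1 k2 : ℕ) : ℝ :=
  sSup {s : ℝ | ∃ (e1 : Fin k1 → X1 → ℝ) (e2 : Fin k2 → X2 → ℝ)
      (d : Y → Fin k1 → Fin k2 → ℝ),
    (∀ i1 x1, 0 ≤ e1 i1 x1) ∧ (∀ i1, ∑ x1, e1 i1 x1 = 1) ∧
    (∀ i2 x2, 0 ≤ e2 i2 x2) ∧ (∀ i2, ∑ x2, e2 i2 x2 = 1) ∧
    (∀ y j1 j2, 0 ≤ d y j1 j2) ∧ (∀ y, ∑ j1, ∑ j2, d y j1 j2 = 1) ∧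
    s = (1 / ((k1 : ℝ) * (k2 : ℝ))) * ∑ i1, ∑ i2, ∑ x1, ∑ x2, ∑ y,
      W x1 x2 y * e1 i1 x1 * e2 i2 x2 * d y i1 i2}

/-- A bipartite non-signaling box `P(x,j|i,y)` between one sender and the receiver,
with `k` messages.  Arguments of `P` are in the order `x j i y`. -/
def IsNSBox1 {X Y : Type*} [Fintype X] [Fintype Y] (k : ℕ)
    (P : X → Fin k → Fin k → Y → ℝ) : Prop :=
  (∀ x j i y, 0 ≤ P x j i y) ∧
  (∀ i y, ∑ x, ∑ j, P x j i y = 1) ∧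
  (∀ j i i' y, ∑ x, P x j i y = ∑ x, P x j i' y) ∧
  (∀ x i y y', ∑ j, P x j i y = ∑ j, P x j i y')

/-- `S^{NS_SR}(W,k1,k2)`: maximum joint success probability with independent
non-signaling assistance between each sender and the receiver. -/
noncomputable def SNSsr [Fintype X1] [Fintype X2] [Fintype Y]
    (W : X1 → X2 → Y → ℝ) (k1 k2 : ℕ) : ℝ :=
  sSup {s : ℝ | ∃ (P1 : X1 → Fin k1 → Fin k1 → Y → ℝ) (P2 : X2 → Fin k2 → Fin k2 → Y → ℝ),
    IsNSBox1 k1 P1 ∧ IsNSBox1 k2 P2 ∧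
    s = (1 / ((k1 : ℝ) * (k2 : ℝ))) * ∑ i1, ∑ i2, ∑ x1, ∑ x2, ∑ y,
      W x1 x2 y * P1 x1 i1 i1 y * P2 x2 i2 i2 y}

/-- `⌈2^{R n}⌉`, the number of messages at rate `R` for blocklength `n`. -/
noncomputable def nMsg (R : ℝ) (n : ℕ) : ℕ := ⌈(2 : ℝ) ^ (R * (n : ℝ))⌉₊

/-- The (unassisted) capacity region `C(W)`. -/
noncomputable def capacityRegion [Fintype X1] [Fintype X2] [Fintype Y]
    (W : X1 → X2 → Y → ℝ) : Set (ℝ × ℝ) :=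
  closure {p : ℝ × ℝ |
    Tendsto (fun n : ℕ => S (macPow n W) (nMsg p.1 n) (nMsg p.2 n)) atTop (𝓝 1)}

/-- The independent non-signaling assisted capacity region `C^{NS_SR}(W)`. -/
noncomputable def capacityRegionNSsr [Fintype X1] [Fintype X2] [Fintype Y]
    (W : X1 → X2 → Y → ℝ) : Set (ℝ × ℝ) :=
  closure {p : ℝ × ℝ |
    Tendsto (fun n : ℕ => SNSsr (macPow n W) (nMsg p.1 n) (nMsg p.2 n)) atTop (𝓝 1)}

end Defs

set_option linter.unusedSectionVars false

section Helpers

lemma prod_extract1 {ι M : Type*} [Fintype ι] [DecidableEq ι] [CommMonoid M] (j : ι) (h : ι → M) :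
    ∏ m, h m = h j * ∏ m ∈ univ.erase j, h m :=
  (Finset.mul_prod_erase univ h (mem_univ j)).symm

lemma prod_extract2 {ι M : Type*} [Fintype ι] [DecidableEq ι] [CommMonoid M] {j l : ι}
    (hjl : j ≠ l) (h : ι → M) :
    ∏ m, h m = h j * (h l * ∏ m ∈ (univ.erase j).erase l, h m) := by
  rw [prod_extract1 j h, Finset.mul_prod_erase (univ.erase j) h
    (Finset.mem_erase.2 ⟨Ne.symm hjl, mem_univ l⟩)]

/-- marginalization over a product measure: one coordinate -/
lemma marg1 {ι κ : Type*} [Fintype ι] [DecidableEq ι] [Fintype κ]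
    (p : κ → ℝ) (hp : ∑ x, p x = 1) (j : ι) (F : κ → ℝ) :
    ∑ c : ι → κ, (∏ m, p (c m)) * F (c j) = ∑ x, p x * F x := by
  have h1 : ∀ c : ι → κ, (∏ m, p (c m)) * F (c j)
      = ∏ m, (if m = j then p (c m) * F (c m) else p (c m)) := by
    intro c
    rw [prod_extract1 j (fun m => if m = j then p (c m) * F (c m) else p (c m)),
        prod_extract1 j (fun m => p (c m))]
    have hpr : (∏ m ∈ univ.erase j, if m = j then p (c m) * F (c m) else p (c m))
        = ∏ m ∈ univ.erase j, p (c m) :=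
      Finset.prod_congr rfl (fun m hm => if_neg (Finset.ne_of_mem_erase hm))
    rw [hpr, if_pos rfl]; ring
  simp_rw [h1]
  rw [← Fintype.prod_sum (fun m x => if m = j then p x * F x else p x),
      prod_extract1 j (fun m => ∑ x, if m = j then p x * F x else p x)]
  have hpr : (∏ m ∈ univ.erase j, ∑ x, if m = j then p x * F x else p x) = 1 := by
    refine Finset.prod_eq_one (fun m hm => ?_)
    have : ∀ x : κ, (if m = j then p x * F x else p x) = p x :=
      fun x => if_neg (Finset.ne_of_mem_erase hm)
    simp_rw [this]; exact hp
  rw [hpr, mul_one]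
  refine Finset.sum_congr rfl (fun x _ => by rw [if_pos rfl])

/-- marginalization: two coordinates, product form -/
lemma marg2prod {ι κ : Type*} [Fintype ι] [DecidableEq ι] [Fintype κ]
    (p : κ → ℝ) (hp : ∑ x, p x = 1) {j l : ι} (hjl : j ≠ l) (F G : κ → ℝ) :
    ∑ c : ι → κ, (∏ m, p (c m)) * (F (c j) * G (c l)) =
      (∑ x, p x * F x) * ∑ x, p x * G x := by
  set f : ι → κ → ℝ := fun m x => if m = j then p x * F x else if m = l then p x * G x else p x
    with hf
  have h1 : ∀ c : ι → κ, (∏ m, p (c m)) * (F (c j) * G (c l)) = ∏ m, f m (c m) := by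
    intro c
    rw [prod_extract2 hjl (fun m => f m (c m)), prod_extract2 hjl (fun m => p (c m))]
    have hpr : (∏ m ∈ (univ.erase j).erase l, f m (c m))
        = ∏ m ∈ (univ.erase j).erase l, p (c m) := by
      refine Finset.prod_congr rfl (fun m hm => ?_)
      rw [hf]; dsimp only
      rw [if_neg (Finset.ne_of_mem_erase (Finset.mem_of_mem_erase hm)),
        if_neg (Finset.ne_of_mem_erase hm)]
    have hj : f j (c j) = p (c j) * F (c j) := by simp [hf]
    have hl : f l (c l) = p (c l) * G (c l) := by simp [hf, hjl.symm]
    rw [hpr, hj, hl]; ring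
  simp_rw [h1]
  rw [← Fintype.prod_sum f, prod_extract2 hjl (fun m => ∑ x, f m x)]
  have hpr : (∏ m ∈ (univ.erase j).erase l, ∑ x, f m x) = 1 := by
    refine Finset.prod_eq_one (fun m hm => ?_)
    have : ∀ x : κ, f m x = p x := by
      intro x; rw [hf]; dsimp only
      rw [if_neg (Finset.ne_of_mem_erase (Finset.mem_of_mem_erase hm)),
        if_neg (Finset.ne_of_mem_erase hm)]
    simp_rw [this]; exact hp
  have hj : ∀ x : κ, f j x = p x * F x := by intro x; simp [hf]
  have hl : ∀ x : κ, f l x = p x * G x := by intro x; simp [hf, hjl.symm]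
  simp_rw [hpr, hj, hl, mul_one]

/-- marginalization: two coordinates, general form -/
lemma marg2 {ι κ : Type*} [Fintype ι] [DecidableEq ι] [Fintype κ] [DecidableEq κ]
    (p : κ → ℝ) (hp : ∑ x, p x = 1) {j l : ι} (hjl : j ≠ l) (F : κ → κ → ℝ) :
    ∑ c : ι → κ, (∏ m, p (c m)) * F (c j) (c l) =
      ∑ x, ∑ x', p x * p x' * F x x' := by
  have h1 : ∀ c : ι → κ, F (c j) (c l) = ∑ x, ∑ x',
      ((if x = c j then (1:ℝ) else 0) * if x' = c l then (1:ℝ) else 0) * F x x' := by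
    intro c
    rw [Finset.sum_eq_single (c j), Finset.sum_eq_single (c l)]
    · simp
    · intro b _ hb; simp [if_neg hb]
    · simp
    · intro b _ hb; simp [if_neg hb]
    · simp
  simp_rw [h1, Finset.mul_sum]
  rw [Finset.sum_comm]
  refine Finset.sum_congr rfl (fun x _ => ?_)
  rw [Finset.sum_comm]
  refine Finset.sum_congr rfl (fun x' _ => ?_)
  have h2 : ∀ c : ι → κ, (∏ m, p (c m)) *
      (((if x = c j then (1:ℝ) else 0) * if x' = c l then (1:ℝ) else 0) * F x x')
      = ((∏ m, p (c m)) * ((fun z => if x = z then (1:ℝ) else 0) (c j) *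
          (fun z => if x' = z then (1:ℝ) else 0) (c l))) * F x x' := by
    intro c; dsimp only; ring
  simp_rw [h2]
  rw [← Finset.sum_mul]
  have h3 := marg2prod p hp hjl (fun z => if x = z then (1:ℝ) else 0)
      (fun z => if x' = z then (1:ℝ) else 0)
  have e1 : ∑ z, p z * (if x = z then (1:ℝ) else 0) = p x := by
    rw [Finset.sum_eq_single x]
    · simp
    · intro b _ hb; rw [if_neg (fun h => hb h.symm), mul_zero]
    · intro h; exact absurd (mem_univ x) h
  have e2 : ∑ z, p z * (if x' = z then (1:ℝ) else 0) = p x' := by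
    rw [Finset.sum_eq_single x']
    · simp
    · intro b _ hb; rw [if_neg (fun h => hb h.symm), mul_zero]
    · intro h; exact absurd (mem_univ x') h
  rw [e1, e2] at h3
  rw [h3]

end Helpers

section Helpers2

/-- Weierstrass: `1 - ∑ g ≤ ∏ (1 - g)` for `g ∈ [0,1]`. -/
lemma one_sub_sum_le_prod_one_sub' {ι : Type*} (s : Finset ι) (g : ι → ℝ)
    (h0 : ∀ i ∈ s, 0 ≤ g i) (h1 : ∀ i ∈ s, g i ≤ 1) :
    1 - ∑ i ∈ s, g i ≤ ∏ i ∈ s, (1 - g i) := by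
  classical
  induction s using Finset.induction_on with
  | empty => simp
  | insert a s ha ih =>
    rw [Finset.sum_insert ha, Finset.prod_insert ha]
    have ih' := ih (fun i hi => h0 i (Finset.mem_insert_of_mem hi))
      (fun i hi => h1 i (Finset.mem_insert_of_mem hi))
    have hga0 : 0 ≤ g a := h0 a (Finset.mem_insert_self a s)
    have hga1 : g a ≤ 1 := h1 a (Finset.mem_insert_self a s)
    have hsum0 : 0 ≤ ∑ i ∈ s, g i :=
      Finset.sum_nonneg (fun i hi => h0 i (Finset.mem_insert_of_mem hi))
    nlinarith

/-- probability that exactly one test passes is at most one -/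
lemma sum_mul_prod_one_sub_le_one {ι : Type*} [Fintype ι] [DecidableEq ι] (g : ι → ℝ)
    (h0 : ∀ i, 0 ≤ g i) (h1 : ∀ i, g i ≤ 1) :
    ∑ j, g j * ∏ l ∈ univ.erase j, (1 - g l) ≤ 1 := by
  have key : (1:ℝ) = ∑ t ∈ (univ : Finset ι).powerset,
      (∏ i ∈ t, g i) * ∏ i ∈ univ \ t, (1 - g i) := by
    rw [← Finset.prod_add]
    simp
  have himg : ∀ j : ι, g j * ∏ l ∈ univ.erase j, (1 - g l)
      = (∏ i ∈ {j}, g i) * ∏ i ∈ univ \ {j}, (1 - g i) := by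
    intro j
    rw [Finset.prod_singleton, ← Finset.erase_eq]
  calc ∑ j, g j * ∏ l ∈ univ.erase j, (1 - g l)
      ≤ ∑ t ∈ (univ : Finset ι).powerset, (∏ i ∈ t, g i) * ∏ i ∈ univ \ t, (1 - g i) := ?_
    _ = 1 := key.symm
  simp_rw [himg]
  have hinj : Set.InjOn (fun j : ι => ({j} : Finset ι)) (univ : Finset ι) := by
    intro a _ b _ h
    simpa using h
  rw [← Finset.sum_image (f := fun t => (∏ i ∈ t, g i) * ∏ i ∈ univ \ t, (1 - g i)) hinj]
  refine Finset.sum_le_sum_of_subset_of_nonneg ?_ ?_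
  · intro t ht
    simp only [Finset.mem_image] at ht
    obtain ⟨j, _, rfl⟩ := ht
    simp
  · intro t _ _
    refine mul_nonneg (Finset.prod_nonneg fun i _ => h0 i)
      (Finset.prod_nonneg fun i _ => by have := h1 i; simp; linarith)

/-- the key product bound for two independent decoders -/
lemma delta_prod_bound {a b s t x y : ℝ} (ha0 : 0 ≤ a) (ha1 : a ≤ 1) (hb0 : 0 ≤ b)
    (hb1 : b ≤ 1) (hs : 0 ≤ s) (ht : 0 ≤ t) (hx0 : 0 ≤ x) (hx : a - s ≤ x)
    (hy0 : 0 ≤ y) (hy : b - t ≤ y) : a * b - s - t ≤ x * y := by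
  rcases le_or_gt a s with h | h
  · nlinarith
  · rcases le_or_gt b t with h' | h'
    · nlinarith
    · nlinarith [mul_le_mul hx hy (by linarith) hx0]

/-- existence of an element at least the weighted average -/
lemma exists_ge_weighted_avg {ι : Type*} [Fintype ι] [Nonempty ι] (w v : ι → ℝ)
    (hw0 : ∀ i, 0 ≤ w i) (hw1 : ∑ i, w i = 1) {B : ℝ} (h : B ≤ ∑ i, w i * v i) :
    ∃ i, B ≤ v i := by
  by_contra hc
  push_neg at hc
  have h2 : ∑ i, w i * v i ≤ ∑ i, w i * B := by
    refine Finset.sum_le_sum (fun i _ => ?_)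
    rcases eq_or_lt_of_le (hw0 i) with h' | h'
    · rw [← h']; simp
    · exact mul_le_mul_of_nonneg_left (le_of_lt (hc i)) (hw0 i)
  rw [← Finset.sum_mul, hw1, one_mul] at h2
  -- so B ≤ ∑ ≤ B, equality throughout
  have heq : ∑ i, w i * v i = B := le_antisymm h2 h
  have h3 : ∑ i, w i * (B - v i) = 0 := by
    simp_rw [mul_sub]
    rw [Finset.sum_sub_distrib, ← Finset.sum_mul, hw1, one_mul, heq, sub_self]
  have h4 : ∀ i ∈ (univ : Finset ι), w i * (B - v i) = 0 := by
    refine (Finset.sum_eq_zero_iff_of_nonneg (fun i _ => ?_)).mp h3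
    exact mul_nonneg (hw0 i) (by have := hc i; linarith)
  obtain ⟨i, hwi⟩ : ∃ i, 0 < w i := by
    by_contra hz
    push_neg at hz
    have : ∑ i, w i = 0 := Finset.sum_eq_zero (fun i _ => le_antisymm (hz i) (hw0 i))
    rw [hw1] at this; norm_num at this
  have := h4 i (mem_univ i)
  have hBv : B - v i = 0 := by
    rcases mul_eq_zero.mp this with h' | h'
    · exact absurd h' (ne_of_gt hwi)
    · exact h'
  have := hc i
  linarith [hBv]

end Helpers2

lemma sum_comm_2_3 {A1 A2 B1 B2 B3 : Type*} [Fintype A1] [Fintype A2] [Fintype B1]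
    [Fintype B2] [Fintype B3] (f : A1 → A2 → B1 → B2 → B3 → ℝ) :
    ∑ a1, ∑ a2, ∑ b1, ∑ b2, ∑ b3, f a1 a2 b1 b2 b3
      = ∑ b1, ∑ b2, ∑ b3, ∑ a1, ∑ a2, f a1 a2 b1 b2 b3 := by
  have l : ∀ g : A1 → A2 → ℝ, ∑ q : A1 × A2, g q.1 q.2 = ∑ a1, ∑ a2, g a1 a2 :=
    fun g => Fintype.sum_prod_type' g
  have r : ∀ g : B1 → B2 → B3 → ℝ, ∑ t : B1 × B2 × B3, g t.1 t.2.1 t.2.2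
      = ∑ b1, ∑ b2, ∑ b3, g b1 b2 b3 := by
    intro g
    rw [Fintype.sum_prod_type]
    exact Finset.sum_congr rfl fun b1 _ =>
      Fintype.sum_prod_type' (fun b2 b3 => g b1 b2 b3)
  rw [← l (fun a1 a2 => ∑ b1, ∑ b2, ∑ b3, f a1 a2 b1 b2 b3),
      ← r (fun b1 b2 b3 => ∑ a1, ∑ a2, f a1 a2 b1 b2 b3)]
  simp_rw [← r, ← l]
  exact Finset.sum_comm
section Bounds
variable {X1 X2 Y : Type*} [Fintype X1] [Fintype X2] [Fintype Y]

/-- the feasible set defining `S` -/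
def Sset (W : X1 → X2 → Y → ℝ) (k1 k2 : ℕ) : Set ℝ :=
  {s : ℝ | ∃ (e1 : Fin k1 → X1 → ℝ) (e2 : Fin k2 → X2 → ℝ)
      (d : Y → Fin k1 → Fin k2 → ℝ),
    (∀ i1 x1, 0 ≤ e1 i1 x1) ∧ (∀ i1, ∑ x1, e1 i1 x1 = 1) ∧
    (∀ i2 x2, 0 ≤ e2 i2 x2) ∧ (∀ i2, ∑ x2, e2 i2 x2 = 1) ∧
    (∀ y j1 j2, 0 ≤ d y j1 j2) ∧ (∀ y, ∑ j1, ∑ j2, d y j1 j2 = 1) ∧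
    s = (1 / ((k1 : ℝ) * (k2 : ℝ))) * ∑ i1, ∑ i2, ∑ x1, ∑ x2, ∑ y,
      W x1 x2 y * e1 i1 x1 * e2 i2 x2 * d y i1 i2}

def NSset (W : X1 → X2 → Y → ℝ) (k1 k2 : ℕ) : Set ℝ :=
  {s : ℝ | ∃ (P1 : X1 → Fin k1 → Fin k1 → Y → ℝ) (P2 : X2 → Fin k2 → Fin k2 → Y → ℝ),
    IsNSBox1 k1 P1 ∧ IsNSBox1 k2 P2 ∧
    s = (1 / ((k1 : ℝ) * (k2 : ℝ))) * ∑ i1, ∑ i2, ∑ x1, ∑ x2, ∑ y,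
      W x1 x2 y * P1 x1 i1 i1 y * P2 x2 i2 i2 y}

lemma S_eq_sSup (W : X1 → X2 → Y → ℝ) (k1 k2 : ℕ) : S W k1 k2 = sSup (Sset W k1 k2) := rfl
lemma SNSsr_eq_sSup (W : X1 → X2 → Y → ℝ) (k1 k2 : ℕ) :
    SNSsr W k1 k2 = sSup (NSset W k1 k2) := rfl

lemma SsetVal_nonneg {W : X1 → X2 → Y → ℝ} (hW0 : ∀ x1 x2 y, 0 ≤ W x1 x2 y) {k1 k2 : ℕ}
    {s : ℝ} (hs : s ∈ Sset W k1 k2) : 0 ≤ s := by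
  obtain ⟨e1, e2, d, he10, -, he20, -, hd0, -, rfl⟩ := hs
  have : (0:ℝ) ≤ (k1 : ℝ) * (k2 : ℝ) := by positivity
  refine mul_nonneg (by positivity) ?_
  refine Finset.sum_nonneg fun i1 _ => Finset.sum_nonneg fun i2 _ =>
    Finset.sum_nonneg fun x1 _ => Finset.sum_nonneg fun x2 _ =>
    Finset.sum_nonneg fun y _ => ?_
  have := hW0 x1 x2 y
  have := he10 i1 x1
  have := he20 i2 x2
  have := hd0 y i1 i2
  positivity

lemma NSsetVal_nonneg {W : X1 → X2 → Y → ℝ} (hW0 : ∀ x1 x2 y, 0 ≤ W x1 x2 y) {k1 k2 : ℕ}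
    {s : ℝ} (hs : s ∈ NSset W k1 k2) : 0 ≤ s := by
  obtain ⟨P1, P2, hP1, hP2, rfl⟩ := hs
  refine mul_nonneg (by positivity) ?_
  refine Finset.sum_nonneg fun i1 _ => Finset.sum_nonneg fun i2 _ =>
    Finset.sum_nonneg fun x1 _ => Finset.sum_nonneg fun x2 _ =>
    Finset.sum_nonneg fun y _ => ?_
  have := hW0 x1 x2 y
  have := hP1.1 x1 i1 i1 y
  have := hP2.1 x2 i2 i2 y
  positivity

lemma SsetVal_le_one {W : X1 → X2 → Y → ℝ} (hW0 : ∀ x1 x2 y, 0 ≤ W x1 x2 y)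
    (hW1 : ∀ x1 x2, ∑ y, W x1 x2 y = 1) {k1 k2 : ℕ} (hk1 : 0 < k1) (hk2 : 0 < k2)
    {s : ℝ} (hs : s ∈ Sset W k1 k2) : s ≤ 1 := by
  obtain ⟨e1, e2, d, he10, he1s, he20, he2s, hd0, hds, rfl⟩ := hs
  have hkpos : (0:ℝ) < (k1 : ℝ) * (k2 : ℝ) := by
    have h1 : (0:ℝ) < (k1:ℝ) := by exact_mod_cast hk1
    have h2 : (0:ℝ) < (k2:ℝ) := by exact_mod_cast hk2
    positivity
  have hinner : ∀ i1 i2, (∑ x1, ∑ x2, ∑ y,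
      W x1 x2 y * e1 i1 x1 * e2 i2 x2 * d y i1 i2) ≤ 1 := by
    intro i1 i2
    have hd1 : ∀ y, d y i1 i2 ≤ 1 := by
      intro y
      calc d y i1 i2 ≤ ∑ j2, d y i1 j2 :=
            Finset.single_le_sum (fun j2 _ => hd0 y i1 j2) (mem_univ i2)
        _ ≤ ∑ j1, ∑ j2, d y j1 j2 :=
            Finset.single_le_sum (f := fun j1 => ∑ j2, d y j1 j2)
              (fun j1 _ => Finset.sum_nonneg fun j2 _ => hd0 y j1 j2) (mem_univ i1)
        _ = 1 := hds y
    calc (∑ x1, ∑ x2, ∑ y, W x1 x2 y * e1 i1 x1 * e2 i2 x2 * d y i1 i2)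
        ≤ ∑ x1, ∑ x2, ∑ y, W x1 x2 y * e1 i1 x1 * e2 i2 x2 := by
          refine Finset.sum_le_sum fun x1 _ => Finset.sum_le_sum fun x2 _ =>
            Finset.sum_le_sum fun y _ => ?_
          have h0 : 0 ≤ W x1 x2 y * e1 i1 x1 * e2 i2 x2 :=
            mul_nonneg (mul_nonneg (hW0 x1 x2 y) (he10 i1 x1)) (he20 i2 x2)
          exact mul_le_of_le_one_right h0 (hd1 y)
      _ = ∑ x1, ∑ x2, e1 i1 x1 * e2 i2 x2 := by
          refine Finset.sum_congr rfl fun x1 _ => Finset.sum_congr rfl fun x2 _ => ?_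
          have : ∀ y, W x1 x2 y * e1 i1 x1 * e2 i2 x2
              = W x1 x2 y * (e1 i1 x1 * e2 i2 x2) := fun y => by ring
          simp_rw [this]
          rw [← Finset.sum_mul, hW1, one_mul]
      _ = 1 := by
          simp_rw [← Finset.mul_sum, he2s i2, mul_one, he1s i1]
  calc (1 / ((k1 : ℝ) * (k2 : ℝ))) * ∑ i1, ∑ i2, ∑ x1, ∑ x2, ∑ y,
        W x1 x2 y * e1 i1 x1 * e2 i2 x2 * d y i1 i2
      ≤ (1 / ((k1 : ℝ) * (k2 : ℝ))) * ((k1 : ℝ) * (k2 : ℝ)) := by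
        refine mul_le_mul_of_nonneg_left ?_ (by positivity)
        calc (∑ i1, ∑ i2, ∑ x1, ∑ x2, ∑ y, W x1 x2 y * e1 i1 x1 * e2 i2 x2 * d y i1 i2)
            ≤ ∑ i1 : Fin k1, ∑ i2 : Fin k2, (1:ℝ) :=
              Finset.sum_le_sum fun i1 _ => Finset.sum_le_sum fun i2 _ => hinner i1 i2
          _ = (k1 : ℝ) * (k2 : ℝ) := by simp [mul_comm]
    _ = 1 := by field_simp
 
lemma NSsetVal_le_one [Nonempty Y] {W : X1 → X2 → Y → ℝ} (hW0 : ∀ x1 x2 y, 0 ≤ W x1 x2 y)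
    (hW1 : ∀ x1 x2, ∑ y, W x1 x2 y = 1) {k1 k2 : ℕ} (hk1 : 0 < k1) (hk2 : 0 < k2)
    {s : ℝ} (hs : s ∈ NSset W k1 k2) : s ≤ 1 := by
  obtain ⟨P1, P2, hP1, hP2, rfl⟩ := hs
  obtain ⟨hP10, hP1n, hP1i, hP1y⟩ := hP1
  obtain ⟨hP20, hP2n, hP2i, hP2y⟩ := hP2
  set y0 : Y := Classical.arbitrary Y
  have hinner : ∀ i1 i2, (∑ x1, ∑ x2, ∑ y,
      W x1 x2 y * P1 x1 i1 i1 y * P2 x2 i2 i2 y) ≤ 1 := by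
    intro i1 i2
    have hb1 : ∀ x1 y, P1 x1 i1 i1 y ≤ ∑ j, P1 x1 j i1 y0 := by
      intro x1 y
      rw [← hP1y x1 i1 y y0]
      exact Finset.single_le_sum (fun j _ => hP10 x1 j i1 y) (mem_univ i1)
    have hb2 : ∀ x2 y, P2 x2 i2 i2 y ≤ ∑ j, P2 x2 j i2 y0 := by
      intro x2 y
      rw [← hP2y x2 i2 y y0]
      exact Finset.single_le_sum (fun j _ => hP20 x2 j i2 y) (mem_univ i2)
    have hsb1 : ∀ x1 : X1, 0 ≤ ∑ j, P1 x1 j i1 y0 :=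
      fun x1 => Finset.sum_nonneg fun j _ => hP10 x1 j i1 y0
    calc (∑ x1, ∑ x2, ∑ y, W x1 x2 y * P1 x1 i1 i1 y * P2 x2 i2 i2 y)
        ≤ ∑ x1, ∑ x2, ∑ y, W x1 x2 y * ((∑ j, P1 x1 j i1 y0) * (∑ j, P2 x2 j i2 y0)) := by
          refine Finset.sum_le_sum fun x1 _ => Finset.sum_le_sum fun x2 _ =>
            Finset.sum_le_sum fun y _ => ?_
          rw [← mul_assoc]
          refine mul_le_mul (mul_le_mul_of_nonneg_left (hb1 x1 y) (hW0 x1 x2 y))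
            (hb2 x2 y) (hP20 x2 i2 i2 y) ?_
          exact mul_nonneg (hW0 x1 x2 y) (hsb1 x1)
      _ = ∑ x1, ∑ x2, (∑ j, P1 x1 j i1 y0) * (∑ j, P2 x2 j i2 y0) := by
          refine Finset.sum_congr rfl fun x1 _ => Finset.sum_congr rfl fun x2 _ => ?_
          rw [← Finset.sum_mul, hW1, one_mul]
      _ = 1 := by
          have h2 : ∑ x2, (∑ j, P2 x2 j i2 y0) = 1 := hP2n i2 y0
          simp_rw [← Finset.mul_sum, h2, mul_one]
          exact hP1n i1 y0
  have hkpos : (0:ℝ) < (k1 : ℝ) * (k2 : ℝ) := by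
    have h1 : (0:ℝ) < (k1:ℝ) := by exact_mod_cast hk1
    have h2 : (0:ℝ) < (k2:ℝ) := by exact_mod_cast hk2
    positivity
  calc (1 / ((k1 : ℝ) * (k2 : ℝ))) * ∑ i1, ∑ i2, ∑ x1, ∑ x2, ∑ y,
        W x1 x2 y * P1 x1 i1 i1 y * P2 x2 i2 i2 y
      ≤ (1 / ((k1 : ℝ) * (k2 : ℝ))) * ((k1 : ℝ) * (k2 : ℝ)) := by
        refine mul_le_mul_of_nonneg_left ?_ (by positivity)
        calc (∑ i1, ∑ i2, ∑ x1, ∑ x2, ∑ y, W x1 x2 y * P1 x1 i1 i1 y * P2 x2 i2 i2 y)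
            ≤ ∑ i1 : Fin k1, ∑ i2 : Fin k2, (1:ℝ) :=
              Finset.sum_le_sum fun i1 _ => Finset.sum_le_sum fun i2 _ => hinner i1 i2
          _ = (k1 : ℝ) * (k2 : ℝ) := by simp [mul_comm]
    _ = 1 := by field_simp

lemma S_nonneg {W : X1 → X2 → Y → ℝ} (hW0 : ∀ x1 x2 y, 0 ≤ W x1 x2 y) (k1 k2 : ℕ) :
    0 ≤ S W k1 k2 :=
  Real.sSup_nonneg (fun _ hx => SsetVal_nonneg hW0 hx)

lemma SNSsr_nonneg {W : X1 → X2 → Y → ℝ} (hW0 : ∀ x1 x2 y, 0 ≤ W x1 x2 y) (k1 k2 : ℕ) :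
    0 ≤ SNSsr W k1 k2 :=
  Real.sSup_nonneg (fun _ hx => NSsetVal_nonneg hW0 hx)

lemma S_le_one {W : X1 → X2 → Y → ℝ} (hW0 : ∀ x1 x2 y, 0 ≤ W x1 x2 y)
    (hW1 : ∀ x1 x2, ∑ y, W x1 x2 y = 1) {k1 k2 : ℕ} (hk1 : 0 < k1) (hk2 : 0 < k2) :
    S W k1 k2 ≤ 1 :=
  Real.sSup_le (fun _ hx => SsetVal_le_one hW0 hW1 hk1 hk2 hx) zero_le_one

lemma SNSsr_le_one [Nonempty Y] {W : X1 → X2 → Y → ℝ} (hW0 : ∀ x1 x2 y, 0 ≤ W x1 x2 y)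
    (hW1 : ∀ x1 x2, ∑ y, W x1 x2 y = 1) {k1 k2 : ℕ} (hk1 : 0 < k1) (hk2 : 0 < k2) :
    SNSsr W k1 k2 ≤ 1 :=
  Real.sSup_le (fun _ hx => NSsetVal_le_one hW0 hW1 hk1 hk2 hx) zero_le_one

lemma bddAbove_Sset {W : X1 → X2 → Y → ℝ} (hW0 : ∀ x1 x2 y, 0 ≤ W x1 x2 y)
    (hW1 : ∀ x1 x2, ∑ y, W x1 x2 y = 1) {k1 k2 : ℕ} (hk1 : 0 < k1) (hk2 : 0 < k2) :
    BddAbove (Sset W k1 k2) :=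
  ⟨1, fun _ hx => SsetVal_le_one hW0 hW1 hk1 hk2 hx⟩

lemma bddAbove_NSset [Nonempty Y] {W : X1 → X2 → Y → ℝ} (hW0 : ∀ x1 x2 y, 0 ≤ W x1 x2 y)
    (hW1 : ∀ x1 x2, ∑ y, W x1 x2 y = 1) {k1 k2 : ℕ} (hk1 : 0 < k1) (hk2 : 0 < k2) :
    BddAbove (NSset W k1 k2) :=
  ⟨1, fun _ hx => NSsetVal_le_one hW0 hW1 hk1 hk2 hx⟩

lemma macPow_nonneg {W : X1 → X2 → Y → ℝ} (hW0 : ∀ x1 x2 y, 0 ≤ W x1 x2 y) (n : ℕ) :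
    ∀ x1 x2 y, 0 ≤ macPow n W x1 x2 y :=
  fun x1 x2 y => Finset.prod_nonneg fun i _ => hW0 (x1 i) (x2 i) (y i)

lemma macPow_sum_one {W : X1 → X2 → Y → ℝ} (hW1 : ∀ x1 x2, ∑ y, W x1 x2 y = 1) (n : ℕ) :
    ∀ x1 x2, ∑ y, macPow n W x1 x2 y = 1 := by
  intro x1 x2
  unfold macPow
  rw [← Fintype.prod_sum (fun i z => W (x1 i) (x2 i) z)]
  exact Finset.prod_eq_one fun i _ => hW1 (x1 i) (x2 i)

end Bounds

section Extract
variable {X1 X2 Y : Type*} [Fintype X1] [Fintype X2] [Fintype Y]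

/-- extract a feasible LP pair `(p, r)` from a non-signaling box -/
lemma ns_extract [Nonempty Y] {X : Type*} [Fintype X] {k : ℕ} (hk : 0 < k)
    (P : X → Fin k → Fin k → Y → ℝ) (hP : IsNSBox1 k P) :
    ∃ p : X → ℝ,
      (∀ x, 0 ≤ p x) ∧ (∑ x, p x = 1) ∧
      (∀ x y, 0 ≤ (1 / (k:ℝ)) * ∑ i, P x i i y) ∧
      (∀ x y, (1 / (k:ℝ)) * ∑ i, P x i i y ≤ p x) ∧
      (∀ y : Y, ∑ x, (1 / (k:ℝ)) * ∑ i, P x i i y = 1 / (k:ℝ)) := by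
  obtain ⟨hP0, hPn, hPi, hPy⟩ := hP
  set y0 : Y := Classical.arbitrary Y
  have hkR : (0:ℝ) < (k:ℝ) := by exact_mod_cast hk
  set i0 : Fin k := ⟨0, hk⟩
  refine ⟨fun x => (1 / (k:ℝ)) * ∑ i, ∑ j, P x j i y0, ?_, ?_, ?_, ?_, ?_⟩
  · intro x
    refine mul_nonneg (by positivity) (Finset.sum_nonneg fun i _ =>
      Finset.sum_nonneg fun j _ => hP0 x j i y0)
  · rw [← Finset.mul_sum, Finset.sum_comm]
    rw [Finset.sum_congr rfl fun i (_ : i ∈ univ) => hPn i y0]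
    simp
    field_simp
  · intro x y
    exact mul_nonneg (by positivity) (Finset.sum_nonneg fun i _ => hP0 x i i y)
  · intro x y
    refine mul_le_mul_of_nonneg_left ?_ (by positivity)
    calc ∑ i, P x i i y ≤ ∑ i, ∑ j, P x j i y :=
          Finset.sum_le_sum fun i _ =>
            Finset.single_le_sum (fun j _ => hP0 x j i y) (mem_univ i)
      _ = ∑ i, ∑ j, P x j i y0 :=
          Finset.sum_congr rfl fun i _ => hPy x i y y0
  · intro y
    rw [← Finset.mul_sum, Finset.sum_comm]
    have h1 : ∀ i : Fin k, ∑ x, P x i i y = ∑ x, P x i i0 y := fun i => hPi i i i0 y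
    rw [Finset.sum_congr rfl fun i (_ : i ∈ univ) => h1 i, Finset.sum_comm, hPn i0 y, mul_one]

/-- the NS success probability in LP form -/
lemma ns_value {W : X1 → X2 → Y → ℝ} {k1 k2 : ℕ} (hk1 : 0 < k1) (hk2 : 0 < k2)
    (P1 : X1 → Fin k1 → Fin k1 → Y → ℝ) (P2 : X2 → Fin k2 → Fin k2 → Y → ℝ) :
    (1 / ((k1 : ℝ) * (k2 : ℝ))) * ∑ i1, ∑ i2, ∑ x1, ∑ x2, ∑ y,
      W x1 x2 y * P1 x1 i1 i1 y * P2 x2 i2 i2 y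
    = ∑ x1, ∑ x2, ∑ y, W x1 x2 y * ((1 / (k1:ℝ)) * ∑ i1, P1 x1 i1 i1 y)
        * ((1 / (k2:ℝ)) * ∑ i2, P2 x2 i2 i2 y) := by
  have hk1R : ((k1:ℝ)) ≠ 0 := by positivity
  have hk2R : ((k2:ℝ)) ≠ 0 := by positivity
  rw [sum_comm_2_3 (fun i1 i2 x1 x2 y => W x1 x2 y * P1 x1 i1 i1 y * P2 x2 i2 i2 y),
    Finset.mul_sum]
  refine Finset.sum_congr rfl fun x1 _ => ?_
  rw [Finset.mul_sum]
  refine Finset.sum_congr rfl fun x2 _ => ?_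
  rw [Finset.mul_sum]
  refine Finset.sum_congr rfl fun y _ => ?_
  have e2 : ∀ a1 : Fin k1, ∑ a2, W x1 x2 y * P1 x1 a1 a1 y * P2 x2 a2 a2 y
      = W x1 x2 y * P1 x1 a1 a1 y * ∑ a2, P2 x2 a2 a2 y :=
    fun a1 => (Finset.mul_sum _ _ _).symm
  simp_rw [e2]
  rw [← Finset.sum_mul, ← Finset.mul_sum]
  ring

end Extract

lemma sum_comm_2_2 {A1 A2 B1 B2 : Type*} [Fintype A1] [Fintype A2] [Fintype B1]
    [Fintype B2] (f : A1 → A2 → B1 → B2 → ℝ) :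
    ∑ a1, ∑ a2, ∑ b1, ∑ b2, f a1 a2 b1 b2
      = ∑ b1, ∑ b2, ∑ a1, ∑ a2, f a1 a2 b1 b2 := by
  have l : ∀ g : A1 → A2 → ℝ, ∑ q : A1 × A2, g q.1 q.2 = ∑ a1, ∑ a2, g a1 a2 :=
    fun g => Fintype.sum_prod_type' g
  have r : ∀ g : B1 → B2 → ℝ, ∑ t : B1 × B2, g t.1 t.2 = ∑ b1, ∑ b2, g b1 b2 :=
    fun g => Fintype.sum_prod_type' g
  rw [← l (fun a1 a2 => ∑ b1, ∑ b2, f a1 a2 b1 b2),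
      ← r (fun b1 b2 => ∑ a1, ∑ a2, f a1 a2 b1 b2)]
  simp_rw [← r, ← l]
  exact Finset.sum_comm

section Round
set_option maxHeartbeats 1000000
variable {X1 X2 Y : Type*} [Fintype X1] [Fintype X2] [Fintype Y]

lemma round_lemma [Nonempty X1] [Nonempty X2] (W : X1 → X2 → Y → ℝ)
    (hW0 : ∀ x1 x2 y, 0 ≤ W x1 x2 y) (hW1 : ∀ x1 x2, ∑ y, W x1 x2 y = 1)
    {k1 k2 k1' k2' : ℕ} (hk1 : 0 < k1) (hk2 : 0 < k2) (hk1' : 0 < k1') (hk2' : 0 < k2')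
    (p1 : X1 → ℝ) (r1 : X1 → Y → ℝ) (p2 : X2 → ℝ) (r2 : X2 → Y → ℝ)
    (hp10 : ∀ x, 0 ≤ p1 x) (hp1s : ∑ x, p1 x = 1)
    (hr10 : ∀ x y, 0 ≤ r1 x y) (hr1p : ∀ x y, r1 x y ≤ p1 x)
    (hr1s : ∀ y : Y, ∑ x, r1 x y = 1 / (k1:ℝ))
    (hp20 : ∀ x, 0 ≤ p2 x) (hp2s : ∑ x, p2 x = 1)
    (hr20 : ∀ x y, 0 ≤ r2 x y) (hr2p : ∀ x y, r2 x y ≤ p2 x)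
    (hr2s : ∀ y : Y, ∑ x, r2 x y = 1 / (k2:ℝ)) :
    (∑ x1, ∑ x2, ∑ y, W x1 x2 y * r1 x1 y * r2 x2 y)
      - ((k1':ℝ) - 1) / (k1:ℝ) - ((k2':ℝ) - 1) / (k2:ℝ) ≤ S W k1' k2' := by
  classical
  set g1 : X1 → Y → ℝ := fun x y => if p1 x = 0 then 0 else r1 x y / p1 x with hg1def
  set g2 : X2 → Y → ℝ := fun x y => if p2 x = 0 then 0 else r2 x y / p2 x with hg2def
  have hg10 : ∀ x y, 0 ≤ g1 x y := by
    intro x y; rw [hg1def]; dsimp only; split_ifs with h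
    · exact le_refl 0
    · exact div_nonneg (hr10 x y) (hp10 x)
  have hg11 : ∀ x y, g1 x y ≤ 1 := by
    intro x y; rw [hg1def]; dsimp only; split_ifs with h
    · exact zero_le_one
    · exact div_le_one_of_le₀ (hr1p x y) (hp10 x)
  have hpg1 : ∀ x y, p1 x * g1 x y = r1 x y := by
    intro x y; rw [hg1def]; dsimp only; split_ifs with h
    · rw [h, zero_mul]
      have h1 := hr1p x y; rw [h] at h1
      linarith [hr10 x y]
    · rw [mul_comm, div_mul_cancel₀ _ h]
  have hg20 : ∀ x y, 0 ≤ g2 x y := by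
    intro x y; rw [hg2def]; dsimp only; split_ifs with h
    · exact le_refl 0
    · exact div_nonneg (hr20 x y) (hp20 x)
  have hg21 : ∀ x y, g2 x y ≤ 1 := by
    intro x y; rw [hg2def]; dsimp only; split_ifs with h
    · exact zero_le_one
    · exact div_le_one_of_le₀ (hr2p x y) (hp20 x)
  have hpg2 : ∀ x y, p2 x * g2 x y = r2 x y := by
    intro x y; rw [hg2def]; dsimp only; split_ifs with h
    · rw [h, zero_mul]
      have h1 := hr2p x y; rw [h] at h1
      linarith [hr20 x y]
    · rw [mul_comm, div_mul_cancel₀ _ h]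
  -- the two sequential decoders
  set j10 : Fin k1' := ⟨0, hk1'⟩ with hj10def
  set j20 : Fin k2' := ⟨0, hk2'⟩ with hj20def
  set E1 : (Fin k1' → X1) → Y → Fin k1' → ℝ :=
    fun c y j => g1 (c j) y * ∏ l ∈ univ.erase j, (1 - g1 (c l) y) with hE1def
  set D1 : (Fin k1' → X1) → Y → Fin k1' → ℝ :=
    fun c y j => E1 c y j + if j = j10 then 1 - ∑ j', E1 c y j' else 0 with hD1def
  set E2 : (Fin k2' → X2) → Y → Fin k2' → ℝ :=
    fun c y j => g2 (c j) y * ∏ l ∈ univ.erase j, (1 - g2 (c l) y) with hE2def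
  set D2 : (Fin k2' → X2) → Y → Fin k2' → ℝ :=
    fun c y j => E2 c y j + if j = j20 then 1 - ∑ j', E2 c y j' else 0 with hD2def
  have hE10 : ∀ c y j, 0 ≤ E1 c y j := fun c y j =>
    mul_nonneg (hg10 _ _) (Finset.prod_nonneg fun l _ => by linarith [hg11 (c l) y])
  have hE1sum : ∀ c y, ∑ j, E1 c y j ≤ 1 := fun c y =>
    sum_mul_prod_one_sub_le_one (fun l => g1 (c l) y) (fun l => hg10 _ _) (fun l => hg11 _ _)
  have hE20 : ∀ c y j, 0 ≤ E2 c y j := fun c y j =>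
    mul_nonneg (hg20 _ _) (Finset.prod_nonneg fun l _ => by linarith [hg21 (c l) y])
  have hE2sum : ∀ c y, ∑ j, E2 c y j ≤ 1 := fun c y =>
    sum_mul_prod_one_sub_le_one (fun l => g2 (c l) y) (fun l => hg20 _ _) (fun l => hg21 _ _)
  have hD10 : ∀ c y j, 0 ≤ D1 c y j := by
    intro c y j; rw [hD1def]; dsimp only; split_ifs with h
    · have := hE1sum c y; have := hE10 c y j; linarith
    · simpa using hE10 c y j
  have hD20 : ∀ c y j, 0 ≤ D2 c y j := by
    intro c y j; rw [hD2def]; dsimp only; split_ifs with h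
    · have := hE2sum c y; have := hE20 c y j; linarith
    · simpa using hE20 c y j
  have hD1sum : ∀ c y, ∑ j, D1 c y j = 1 := by
    intro c y; rw [hD1def]; dsimp only
    rw [Finset.sum_add_distrib, Finset.sum_ite_eq' univ j10 (fun _ => 1 - ∑ j', E1 c y j')]
    simp
  have hD2sum : ∀ c y, ∑ j, D2 c y j = 1 := by
    intro c y; rw [hD2def]; dsimp only
    rw [Finset.sum_add_distrib, Finset.sum_ite_eq' univ j20 (fun _ => 1 - ∑ j', E2 c y j')]
    simp
  have hD1lb : ∀ c y j, g1 (c j) y - (∑ l ∈ univ.erase j, g1 (c l) y) ≤ D1 c y j := by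
    intro c y j
    have h1 : 1 - (∑ l ∈ univ.erase j, g1 (c l) y) ≤ ∏ l ∈ univ.erase j, (1 - g1 (c l) y) :=
      one_sub_sum_le_prod_one_sub' _ _ (fun l _ => hg10 _ _) (fun l _ => hg11 _ _)
    have hS0 : 0 ≤ ∑ l ∈ univ.erase j, g1 (c l) y := Finset.sum_nonneg fun l _ => hg10 _ _
    have hE : g1 (c j) y - (∑ l ∈ univ.erase j, g1 (c l) y) ≤ E1 c y j := by
      rw [hE1def]; dsimp only
      have h2 := mul_le_mul_of_nonneg_left h1 (hg10 (c j) y)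
      nlinarith [hg10 (c j) y, hg11 (c j) y]
    refine le_trans hE ?_
    rw [hD1def]; dsimp only; split_ifs with h
    · have := hE1sum c y; linarith
    · linarith
  have hD2lb : ∀ c y j, g2 (c j) y - (∑ l ∈ univ.erase j, g2 (c l) y) ≤ D2 c y j := by
    intro c y j
    have h1 : 1 - (∑ l ∈ univ.erase j, g2 (c l) y) ≤ ∏ l ∈ univ.erase j, (1 - g2 (c l) y) :=
      one_sub_sum_le_prod_one_sub' _ _ (fun l _ => hg20 _ _) (fun l _ => hg21 _ _)
    have hS0 : 0 ≤ ∑ l ∈ univ.erase j, g2 (c l) y := Finset.sum_nonneg fun l _ => hg20 _ _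
    have hE : g2 (c j) y - (∑ l ∈ univ.erase j, g2 (c l) y) ≤ E2 c y j := by
      rw [hE2def]; dsimp only
      have h2 := mul_le_mul_of_nonneg_left h1 (hg20 (c j) y)
      nlinarith [hg20 (c j) y, hg21 (c j) y]
    refine le_trans hE ?_
    rw [hD2def]; dsimp only; split_ifs with h
    · have := hE2sum c y; linarith
    · linarith
  -- the (codebook-indexed) classical success probability
  set V : (Fin k1' → X1) → (Fin k2' → X2) → ℝ := fun c d =>
    (1 / ((k1':ℝ) * (k2':ℝ))) * ∑ j1, ∑ j2, ∑ x1, ∑ x2, ∑ y,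
      W x1 x2 y * (if x1 = c j1 then (1:ℝ) else 0) * (if x2 = d j2 then (1:ℝ) else 0)
        * (D1 c y j1 * D2 d y j2) with hVdef
  have hVmem : ∀ c d, V c d ∈ Sset W k1' k2' := by
    intro c d
    refine ⟨fun j x => if x = c j then 1 else 0, fun j x => if x = d j then 1 else 0,
      fun y j1 j2 => D1 c y j1 * D2 d y j2, ?_, ?_, ?_, ?_, ?_, ?_, ?_⟩
    · intro j x; dsimp only; split_ifs <;> norm_num
    · intro j; simp
    · intro j x; dsimp only; split_ifs <;> norm_num
    · intro j; simp
    · intro y j1 j2; exact mul_nonneg (hD10 c y j1) (hD20 d y j2)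
    · intro y
      have h : ∀ j1 : Fin k1', ∑ j2, D1 c y j1 * D2 d y j2 = D1 c y j1 := by
        intro j1; rw [← Finset.mul_sum, hD2sum d y, mul_one]
      simp_rw [h]; exact hD1sum c y
    · rw [hVdef]
  have hVcollapse : ∀ c d, V c d = (1 / ((k1':ℝ) * (k2':ℝ))) * ∑ j1, ∑ j2, ∑ y,
      W (c j1) (d j2) y * (D1 c y j1 * D2 d y j2) := by
    intro c d
    rw [hVdef]; dsimp only
    congr 1
    refine Finset.sum_congr rfl fun j1 _ => Finset.sum_congr rfl fun j2 _ => ?_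
    rw [Finset.sum_eq_single (c j1)]
    · rw [Finset.sum_eq_single (d j2)]
      · refine Finset.sum_congr rfl fun y _ => by simp
      · intro x2 _ hx2; refine Finset.sum_eq_zero fun y _ => by simp [hx2]
      · intro h; exact absurd (mem_univ _) h
    · intro x1 _ hx1
      refine Finset.sum_eq_zero fun x2 _ => Finset.sum_eq_zero fun y _ => by simp [hx1]
    · intro h; exact absurd (mem_univ _) h
  -- helper facts about the weights
  have hw0 : ∀ (c : Fin k1' → X1) (d : Fin k2' → X2),
      0 ≤ (∏ m, p1 (c m)) * (∏ m, p2 (d m)) :=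
    fun c d => mul_nonneg (Finset.prod_nonneg fun m _ => hp10 _)
      (Finset.prod_nonneg fun m _ => hp20 _)
  have hwsum1 : ∑ c : Fin k1' → X1, ∏ m, p1 (c m) = 1 := by
    rw [← Fintype.prod_sum (fun (_ : Fin k1') (x : X1) => p1 x)]
    exact Finset.prod_eq_one fun m _ => hp1s
  have hwsum2 : ∑ d : Fin k2' → X2, ∏ m, p2 (d m) = 1 := by
    rw [← Fintype.prod_sum (fun (_ : Fin k2') (x : X2) => p2 x)]
    exact Finset.prod_eq_one fun m _ => hp2s
  have hr1sum : ∀ y : Y, ∑ x', p1 x' * g1 x' y = 1/(k1:ℝ) := by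
    intro y; simp_rw [hpg1]; exact hr1s y
  have hr2sum : ∀ y : Y, ∑ x', p2 x' * g2 x' y = 1/(k2:ℝ) := by
    intro y; simp_rw [hpg2]; exact hr2s y
  have hk1R : (0:ℝ) < (k1:ℝ) := by exact_mod_cast hk1
  have hk2R : (0:ℝ) < (k2:ℝ) := by exact_mod_cast hk2
  have hk1R' : (0:ℝ) < (k1':ℝ) := by exact_mod_cast hk1'
  have hk2R' : (0:ℝ) < (k2':ℝ) := by exact_mod_cast hk2'
  -- inner LP evaluations
  have innerEval1 : ∀ x : X1,
      ∑ x', p1 x' * (∑ x2, p2 x2 * (∑ y, W x x2 y * g1 x' y)) = 1/(k1:ℝ) := by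
    intro x
    calc ∑ x', p1 x' * (∑ x2, p2 x2 * (∑ y, W x x2 y * g1 x' y))
        = ∑ x', ∑ x2, p1 x' * (p2 x2 * (∑ y, W x x2 y * g1 x' y)) := by
          exact Finset.sum_congr rfl fun x' _ => Finset.mul_sum _ _ _
      _ = ∑ x2, ∑ x', p1 x' * (p2 x2 * (∑ y, W x x2 y * g1 x' y)) := Finset.sum_comm
      _ = ∑ x2, p2 x2 * (∑ x', ∑ y, p1 x' * (W x x2 y * g1 x' y)) := by
          refine Finset.sum_congr rfl fun x2 _ => ?_
          rw [Finset.mul_sum]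
          refine Finset.sum_congr rfl fun x' _ => ?_
          rw [mul_left_comm]
          congr 1
          exact Finset.mul_sum _ _ _
      _ = ∑ x2, p2 x2 * (∑ y, ∑ x', p1 x' * (W x x2 y * g1 x' y)) := by
          exact Finset.sum_congr rfl fun x2 _ => congrArg _ Finset.sum_comm
      _ = ∑ x2, p2 x2 * (∑ y, W x x2 y * (1/(k1:ℝ))) := by
          refine Finset.sum_congr rfl fun x2 _ => congrArg _ ?_
          refine Finset.sum_congr rfl fun y _ => ?_
          have h : ∀ x', p1 x' * (W x x2 y * g1 x' y) = W x x2 y * (p1 x' * g1 x' y) :=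
            fun x' => by ring
          simp_rw [h, ← Finset.mul_sum, hr1sum y]
      _ = 1/(k1:ℝ) := by
          have h : ∀ x2, p2 x2 * (∑ y, W x x2 y * (1/(k1:ℝ))) = p2 x2 * (1/(k1:ℝ)) := by
            intro x2
            rw [← Finset.sum_mul, hW1 x x2, one_mul]
          simp_rw [h, ← Finset.sum_mul, hp2s, one_mul]
  have innerEval2 : ∀ x2 : X2,
      ∑ x', p2 x' * (∑ x1, p1 x1 * (∑ y, W x1 x2 y * g2 x' y)) = 1/(k2:ℝ) := by
    intro x2
    calc ∑ x', p2 x' * (∑ x1, p1 x1 * (∑ y, W x1 x2 y * g2 x' y))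
        = ∑ x', ∑ x1, p2 x' * (p1 x1 * (∑ y, W x1 x2 y * g2 x' y)) := by
          exact Finset.sum_congr rfl fun x' _ => Finset.mul_sum _ _ _
      _ = ∑ x1, ∑ x', p2 x' * (p1 x1 * (∑ y, W x1 x2 y * g2 x' y)) := Finset.sum_comm
      _ = ∑ x1, p1 x1 * (∑ x', ∑ y, p2 x' * (W x1 x2 y * g2 x' y)) := by
          refine Finset.sum_congr rfl fun x1 _ => ?_
          rw [Finset.mul_sum]
          refine Finset.sum_congr rfl fun x' _ => ?_
          rw [mul_left_comm]
          congr 1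
          exact Finset.mul_sum _ _ _
      _ = ∑ x1, p1 x1 * (∑ y, ∑ x', p2 x' * (W x1 x2 y * g2 x' y)) := by
          exact Finset.sum_congr rfl fun x1 _ => congrArg _ Finset.sum_comm
      _ = ∑ x1, p1 x1 * (∑ y, W x1 x2 y * (1/(k2:ℝ))) := by
          refine Finset.sum_congr rfl fun x1 _ => congrArg _ ?_
          refine Finset.sum_congr rfl fun y _ => ?_
          have h : ∀ x', p2 x' * (W x1 x2 y * g2 x' y) = W x1 x2 y * (p2 x' * g2 x' y) :=
            fun x' => by ring
          simp_rw [h, ← Finset.mul_sum, hr2sum y]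
      _ = 1/(k2:ℝ) := by
          have h : ∀ x1, p1 x1 * (∑ y, W x1 x2 y * (1/(k2:ℝ))) = p1 x1 * (1/(k2:ℝ)) := by
            intro x1
            rw [← Finset.sum_mul, hW1 x1 x2, one_mul]
          simp_rw [h, ← Finset.sum_mul, hp1s, one_mul]
  -- the key per-message-pair bound
  have key : ∀ (j1 : Fin k1') (j2 : Fin k2'),
      (∑ x1, ∑ x2, ∑ y, W x1 x2 y * r1 x1 y * r2 x2 y)
        - ((k1':ℝ) - 1) / (k1:ℝ) - ((k2':ℝ) - 1) / (k2:ℝ)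
      ≤ ∑ c : Fin k1' → X1, ∑ d : Fin k2' → X2,
          ((∏ m, p1 (c m)) * (∏ m, p2 (d m))) *
            (∑ y, W (c j1) (d j2) y * (D1 c y j1 * D2 d y j2)) := by
    intro j1 j2
    -- the main term
    have hT : ∑ c : Fin k1' → X1, ∑ d : Fin k2' → X2,
        ((∏ m, p1 (c m)) * (∏ m, p2 (d m))) *
          (∑ y, W (c j1) (d j2) y * (g1 (c j1) y * g2 (d j2) y))
        = ∑ x1, ∑ x2, ∑ y, W x1 x2 y * r1 x1 y * r2 x2 y := by
      have step1 : ∀ c : Fin k1' → X1,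
          ∑ d : Fin k2' → X2, ((∏ m, p1 (c m)) * (∏ m, p2 (d m))) *
            (∑ y, W (c j1) (d j2) y * (g1 (c j1) y * g2 (d j2) y))
          = (∏ m, p1 (c m)) * (∑ x2, p2 x2 *
              (∑ y, W (c j1) x2 y * (g1 (c j1) y * g2 x2 y))) := by
        intro c
        simp_rw [mul_assoc]
        rw [← Finset.mul_sum]
        congr 1
        exact marg1 p2 hp2s j2
          (fun x2 => ∑ y, W (c j1) x2 y * (g1 (c j1) y * g2 x2 y))
      calc ∑ c : Fin k1' → X1, ∑ d : Fin k2' → X2,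
            ((∏ m, p1 (c m)) * (∏ m, p2 (d m))) *
              (∑ y, W (c j1) (d j2) y * (g1 (c j1) y * g2 (d j2) y))
          = ∑ c : Fin k1' → X1, (∏ m, p1 (c m)) * (∑ x2, p2 x2 *
              (∑ y, W (c j1) x2 y * (g1 (c j1) y * g2 x2 y))) :=
            Finset.sum_congr rfl fun c _ => step1 c
        _ = ∑ x1, p1 x1 * (∑ x2, p2 x2 * (∑ y, W x1 x2 y * (g1 x1 y * g2 x2 y))) :=
            marg1 p1 hp1s j1
              (fun x1 => ∑ x2, p2 x2 * (∑ y, W x1 x2 y * (g1 x1 y * g2 x2 y)))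
        _ = ∑ x1, ∑ x2, ∑ y, W x1 x2 y * r1 x1 y * r2 x2 y := by
            refine Finset.sum_congr rfl fun x1 _ => ?_
            rw [Finset.mul_sum]
            refine Finset.sum_congr rfl fun x2 _ => ?_
            rw [mul_left_comm, Finset.mul_sum]
            rw [Finset.mul_sum]
            refine Finset.sum_congr rfl fun y _ => ?_
            rw [← hpg1 x1 y, ← hpg2 x2 y]
            ring
    -- the first error term
    have hU1 : ∑ c : Fin k1' → X1, ∑ d : Fin k2' → X2,
        ((∏ m, p1 (c m)) * (∏ m, p2 (d m))) *
          (∑ y, W (c j1) (d j2) y * (∑ l ∈ univ.erase j1, g1 (c l) y))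
        = ((k1':ℝ) - 1) / (k1:ℝ) := by
      have e0 : ∀ (c : Fin k1' → X1) (d : Fin k2' → X2),
          (∑ y, W (c j1) (d j2) y * (∑ l ∈ univ.erase j1, g1 (c l) y))
          = ∑ l ∈ univ.erase j1, ∑ y, W (c j1) (d j2) y * g1 (c l) y := by
        intro c d
        simp_rw [Finset.mul_sum]
        exact Finset.sum_comm
      simp_rw [e0]
      have step1 : ∀ c : Fin k1' → X1,
          ∑ d : Fin k2' → X2, ((∏ m, p1 (c m)) * (∏ m, p2 (d m))) *
            (∑ l ∈ univ.erase j1, ∑ y, W (c j1) (d j2) y * g1 (c l) y)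
          = (∏ m, p1 (c m)) * (∑ l ∈ univ.erase j1, ∑ x2, p2 x2 *
              (∑ y, W (c j1) x2 y * g1 (c l) y)) := by
        intro c
        simp_rw [mul_assoc]
        rw [← Finset.mul_sum]
        congr 1
        have h := marg1 p2 hp2s j2
          (fun x2 => ∑ l ∈ univ.erase j1, ∑ y, W (c j1) x2 y * g1 (c l) y)
        rw [h]
        calc ∑ x2, p2 x2 * (∑ l ∈ univ.erase j1, ∑ y, W (c j1) x2 y * g1 (c l) y)
            = ∑ x2, ∑ l ∈ univ.erase j1, p2 x2 * (∑ y, W (c j1) x2 y * g1 (c l) y) :=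
              Finset.sum_congr rfl fun x2 _ => Finset.mul_sum _ _ _
          _ = ∑ l ∈ univ.erase j1, ∑ x2, p2 x2 * (∑ y, W (c j1) x2 y * g1 (c l) y) :=
              Finset.sum_comm
      calc ∑ c : Fin k1' → X1, ∑ d : Fin k2' → X2,
            ((∏ m, p1 (c m)) * (∏ m, p2 (d m))) *
              (∑ l ∈ univ.erase j1, ∑ y, W (c j1) (d j2) y * g1 (c l) y)
          = ∑ c : Fin k1' → X1, (∏ m, p1 (c m)) * (∑ l ∈ univ.erase j1, ∑ x2, p2 x2 *
              (∑ y, W (c j1) x2 y * g1 (c l) y)) :=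
            Finset.sum_congr rfl fun c _ => step1 c
        _ = ∑ l ∈ univ.erase j1, ∑ c : Fin k1' → X1, (∏ m, p1 (c m)) *
              (∑ x2, p2 x2 * (∑ y, W (c j1) x2 y * g1 (c l) y)) := by
            simp_rw [Finset.mul_sum]
            exact Finset.sum_comm
        _ = ∑ l ∈ univ.erase j1, (1/(k1:ℝ)) := by
            refine Finset.sum_congr rfl fun l hl => ?_
            have hne : j1 ≠ l := fun h => (Finset.ne_of_mem_erase hl) h.symm
            rw [marg2 p1 hp1s hne
              (fun a b => ∑ x2, p2 x2 * (∑ y, W a x2 y * g1 b y))]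
            calc ∑ x, ∑ x', p1 x * p1 x' *
                  (∑ x2, p2 x2 * (∑ y, W x x2 y * g1 x' y))
                = ∑ x, p1 x * (∑ x', p1 x' *
                    (∑ x2, p2 x2 * (∑ y, W x x2 y * g1 x' y))) := by
                  refine Finset.sum_congr rfl fun x _ => ?_
                  rw [Finset.mul_sum]
                  exact Finset.sum_congr rfl fun x' _ => mul_assoc _ _ _
              _ = ∑ x, p1 x * (1/(k1:ℝ)) := by
                  refine Finset.sum_congr rfl fun x _ => ?_
                  rw [innerEval1 x]
              _ = 1/(k1:ℝ) := by rw [← Finset.sum_mul, hp1s, one_mul]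
        _ = ((k1':ℝ) - 1) / (k1:ℝ) := by
            rw [Finset.sum_const, Finset.card_erase_of_mem (mem_univ j1),
              Finset.card_univ, Fintype.card_fin, nsmul_eq_mul,
              Nat.cast_sub hk1', Nat.cast_one]
            ring
    -- the second error term
    have hU2 : ∑ c : Fin k1' → X1, ∑ d : Fin k2' → X2,
        ((∏ m, p1 (c m)) * (∏ m, p2 (d m))) *
          (∑ y, W (c j1) (d j2) y * (∑ l ∈ univ.erase j2, g2 (d l) y))
        = ((k2':ℝ) - 1) / (k2:ℝ) := by
      have e0 : ∀ (c : Fin k1' → X1) (d : Fin k2' → X2),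
          (∑ y, W (c j1) (d j2) y * (∑ l ∈ univ.erase j2, g2 (d l) y))
          = ∑ l ∈ univ.erase j2, ∑ y, W (c j1) (d j2) y * g2 (d l) y := by
        intro c d
        simp_rw [Finset.mul_sum]
        exact Finset.sum_comm
      simp_rw [e0]
      rw [Finset.sum_comm]
      have step1 : ∀ d : Fin k2' → X2,
          ∑ c : Fin k1' → X1, ((∏ m, p1 (c m)) * (∏ m, p2 (d m))) *
            (∑ l ∈ univ.erase j2, ∑ y, W (c j1) (d j2) y * g2 (d l) y)
          = (∏ m, p2 (d m)) * (∑ l ∈ univ.erase j2, ∑ x1, p1 x1 *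
              (∑ y, W x1 (d j2) y * g2 (d l) y)) := by
        intro d
        have e1 : ∀ c : Fin k1' → X1, ((∏ m, p1 (c m)) * (∏ m, p2 (d m))) *
            (∑ l ∈ univ.erase j2, ∑ y, W (c j1) (d j2) y * g2 (d l) y)
            = (∏ m, p2 (d m)) * ((∏ m, p1 (c m)) *
              (∑ l ∈ univ.erase j2, ∑ y, W (c j1) (d j2) y * g2 (d l) y)) :=
          fun c => by ring
        simp_rw [e1]
        rw [← Finset.mul_sum]
        congr 1
        have h := marg1 p1 hp1s j1
          (fun x1 => ∑ l ∈ univ.erase j2, ∑ y, W x1 (d j2) y * g2 (d l) y)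
        rw [h]
        calc ∑ x1, p1 x1 * (∑ l ∈ univ.erase j2, ∑ y, W x1 (d j2) y * g2 (d l) y)
            = ∑ x1, ∑ l ∈ univ.erase j2, p1 x1 * (∑ y, W x1 (d j2) y * g2 (d l) y) :=
              Finset.sum_congr rfl fun x1 _ => Finset.mul_sum _ _ _
          _ = ∑ l ∈ univ.erase j2, ∑ x1, p1 x1 * (∑ y, W x1 (d j2) y * g2 (d l) y) :=
              Finset.sum_comm
      calc ∑ d : Fin k2' → X2, ∑ c : Fin k1' → X1,
            ((∏ m, p1 (c m)) * (∏ m, p2 (d m))) *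
              (∑ l ∈ univ.erase j2, ∑ y, W (c j1) (d j2) y * g2 (d l) y)
          = ∑ d : Fin k2' → X2, (∏ m, p2 (d m)) * (∑ l ∈ univ.erase j2, ∑ x1, p1 x1 *
              (∑ y, W x1 (d j2) y * g2 (d l) y)) :=
            Finset.sum_congr rfl fun d _ => step1 d
        _ = ∑ l ∈ univ.erase j2, ∑ d : Fin k2' → X2, (∏ m, p2 (d m)) *
              (∑ x1, p1 x1 * (∑ y, W x1 (d j2) y * g2 (d l) y)) := by
            simp_rw [Finset.mul_sum]
            exact Finset.sum_comm
        _ = ∑ l ∈ univ.erase j2, (1/(k2:ℝ)) := by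
            refine Finset.sum_congr rfl fun l hl => ?_
            have hne : j2 ≠ l := fun h => (Finset.ne_of_mem_erase hl) h.symm
            rw [marg2 p2 hp2s hne
              (fun a b => ∑ x1, p1 x1 * (∑ y, W x1 a y * g2 b y))]
            calc ∑ x, ∑ x', p2 x * p2 x' *
                  (∑ x1, p1 x1 * (∑ y, W x1 x y * g2 x' y))
                = ∑ x, p2 x * (∑ x', p2 x' *
                    (∑ x1, p1 x1 * (∑ y, W x1 x y * g2 x' y))) := by
                  refine Finset.sum_congr rfl fun x _ => ?_
                  rw [Finset.mul_sum]
                  exact Finset.sum_congr rfl fun x' _ => mul_assoc _ _ _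
              _ = ∑ x, p2 x * (1/(k2:ℝ)) := by
                  refine Finset.sum_congr rfl fun x _ => ?_
                  rw [innerEval2 x]
              _ = 1/(k2:ℝ) := by rw [← Finset.sum_mul, hp2s, one_mul]
        _ = ((k2':ℝ) - 1) / (k2:ℝ) := by
            rw [Finset.sum_const, Finset.card_erase_of_mem (mem_univ j2),
              Finset.card_univ, Fintype.card_fin, nsmul_eq_mul,
              Nat.cast_sub hk2', Nat.cast_one]
            ring
    -- pointwise bound
    have hpt : ∀ (c : Fin k1' → X1) (d : Fin k2' → X2),
        (∑ y, W (c j1) (d j2) y * (g1 (c j1) y * g2 (d j2) y))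
          - (∑ y, W (c j1) (d j2) y * (∑ l ∈ univ.erase j1, g1 (c l) y))
          - (∑ y, W (c j1) (d j2) y * (∑ l ∈ univ.erase j2, g2 (d l) y))
        ≤ ∑ y, W (c j1) (d j2) y * (D1 c y j1 * D2 d y j2) := by
      intro c d
      rw [← Finset.sum_sub_distrib, ← Finset.sum_sub_distrib]
      refine Finset.sum_le_sum fun y _ => ?_
      have hb := delta_prod_bound (hg10 (c j1) y) (hg11 (c j1) y) (hg20 (d j2) y)
        (hg21 (d j2) y) (Finset.sum_nonneg fun l _ => hg10 (c l) y)
        (Finset.sum_nonneg fun l _ => hg20 (d l) y)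
        (hD10 c y j1) (hD1lb c y j1) (hD20 d y j2) (hD2lb d y j2)
      have hb2 := mul_le_mul_of_nonneg_left hb (hW0 (c j1) (d j2) y)
      calc W (c j1) (d j2) y * (g1 (c j1) y * g2 (d j2) y)
            - W (c j1) (d j2) y * (∑ l ∈ univ.erase j1, g1 (c l) y)
            - W (c j1) (d j2) y * (∑ l ∈ univ.erase j2, g2 (d l) y)
          = W (c j1) (d j2) y * (g1 (c j1) y * g2 (d j2) y
              - (∑ l ∈ univ.erase j1, g1 (c l) y) - (∑ l ∈ univ.erase j2, g2 (d l) y)) := by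
            ring
        _ ≤ W (c j1) (d j2) y * (D1 c y j1 * D2 d y j2) := hb2
    -- assemble
    calc (∑ x1, ∑ x2, ∑ y, W x1 x2 y * r1 x1 y * r2 x2 y)
          - ((k1':ℝ) - 1) / (k1:ℝ) - ((k2':ℝ) - 1) / (k2:ℝ)
        = ∑ c : Fin k1' → X1, ∑ d : Fin k2' → X2,
            (((∏ m, p1 (c m)) * (∏ m, p2 (d m))) *
                (∑ y, W (c j1) (d j2) y * (g1 (c j1) y * g2 (d j2) y))
              - ((∏ m, p1 (c m)) * (∏ m, p2 (d m))) *
                (∑ y, W (c j1) (d j2) y * (∑ l ∈ univ.erase j1, g1 (c l) y))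
              - ((∏ m, p1 (c m)) * (∏ m, p2 (d m))) *
                (∑ y, W (c j1) (d j2) y * (∑ l ∈ univ.erase j2, g2 (d l) y))) := by
          simp_rw [Finset.sum_sub_distrib]
          rw [hT, hU1, hU2]
      _ ≤ ∑ c : Fin k1' → X1, ∑ d : Fin k2' → X2,
            ((∏ m, p1 (c m)) * (∏ m, p2 (d m))) *
              (∑ y, W (c j1) (d j2) y * (D1 c y j1 * D2 d y j2)) := by
          refine Finset.sum_le_sum fun c _ => Finset.sum_le_sum fun d _ => ?_
          have h3 := mul_le_mul_of_nonneg_left (hpt c d) (hw0 c d)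
          calc ((∏ m, p1 (c m)) * (∏ m, p2 (d m))) *
                  (∑ y, W (c j1) (d j2) y * (g1 (c j1) y * g2 (d j2) y))
                - ((∏ m, p1 (c m)) * (∏ m, p2 (d m))) *
                  (∑ y, W (c j1) (d j2) y * (∑ l ∈ univ.erase j1, g1 (c l) y))
                - ((∏ m, p1 (c m)) * (∏ m, p2 (d m))) *
                  (∑ y, W (c j1) (d j2) y * (∑ l ∈ univ.erase j2, g2 (d l) y))
              = ((∏ m, p1 (c m)) * (∏ m, p2 (d m))) *
                  ((∑ y, W (c j1) (d j2) y * (g1 (c j1) y * g2 (d j2) y))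
                  - (∑ y, W (c j1) (d j2) y * (∑ l ∈ univ.erase j1, g1 (c l) y))
                  - (∑ y, W (c j1) (d j2) y * (∑ l ∈ univ.erase j2, g2 (d l) y))) := by
                ring
            _ ≤ _ := h3
  -- average over message pairs and codebooks
  have hEV : (∑ x1, ∑ x2, ∑ y, W x1 x2 y * r1 x1 y * r2 x2 y)
      - ((k1':ℝ) - 1) / (k1:ℝ) - ((k2':ℝ) - 1) / (k2:ℝ)
      ≤ ∑ c : Fin k1' → X1, ∑ d : Fin k2' → X2,
          ((∏ m, p1 (c m)) * (∏ m, p2 (d m))) * V c d := by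
    have hswap : ∑ c : Fin k1' → X1, ∑ d : Fin k2' → X2,
        ((∏ m, p1 (c m)) * (∏ m, p2 (d m))) * V c d
        = (1 / ((k1':ℝ) * (k2':ℝ))) * ∑ j1, ∑ j2,
            ∑ c : Fin k1' → X1, ∑ d : Fin k2' → X2,
              ((∏ m, p1 (c m)) * (∏ m, p2 (d m))) *
                (∑ y, W (c j1) (d j2) y * (D1 c y j1 * D2 d y j2)) := by
      have h1 : ∀ (c : Fin k1' → X1) (d : Fin k2' → X2),
          ((∏ m, p1 (c m)) * (∏ m, p2 (d m))) * V c d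
          = (1 / ((k1':ℝ) * (k2':ℝ))) * ∑ j1, ∑ j2,
              ((∏ m, p1 (c m)) * (∏ m, p2 (d m))) *
                (∑ y, W (c j1) (d j2) y * (D1 c y j1 * D2 d y j2)) := by
        intro c d
        rw [hVcollapse c d, mul_comm ((∏ m, p1 (c m)) * (∏ m, p2 (d m))), mul_assoc]
        congr 1
        rw [Finset.sum_mul]
        refine Finset.sum_congr rfl fun j1 _ => ?_
        rw [Finset.sum_mul]
        refine Finset.sum_congr rfl fun j2 _ => ?_
        ring
      calc ∑ c : Fin k1' → X1, ∑ d : Fin k2' → X2,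
            ((∏ m, p1 (c m)) * (∏ m, p2 (d m))) * V c d
          = ∑ c : Fin k1' → X1, ∑ d : Fin k2' → X2, (1 / ((k1':ℝ) * (k2':ℝ))) *
              ∑ j1, ∑ j2, ((∏ m, p1 (c m)) * (∏ m, p2 (d m))) *
                (∑ y, W (c j1) (d j2) y * (D1 c y j1 * D2 d y j2)) :=
            Finset.sum_congr rfl fun c _ => Finset.sum_congr rfl fun d _ => h1 c d
        _ = (1 / ((k1':ℝ) * (k2':ℝ))) * ∑ c : Fin k1' → X1, ∑ d : Fin k2' → X2,
              ∑ j1, ∑ j2, ((∏ m, p1 (c m)) * (∏ m, p2 (d m))) *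
                (∑ y, W (c j1) (d j2) y * (D1 c y j1 * D2 d y j2)) := by
            rw [Finset.mul_sum]
            refine Finset.sum_congr rfl fun c _ => ?_
            rw [Finset.mul_sum]
        _ = (1 / ((k1':ℝ) * (k2':ℝ))) * ∑ j1, ∑ j2,
              ∑ c : Fin k1' → X1, ∑ d : Fin k2' → X2,
                ((∏ m, p1 (c m)) * (∏ m, p2 (d m))) *
                  (∑ y, W (c j1) (d j2) y * (D1 c y j1 * D2 d y j2)) := by
            congr 1
            exact sum_comm_2_2 (fun c d j1 j2 => ((∏ m, p1 (c m)) * (∏ m, p2 (d m))) *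
              (∑ y, W (c j1) (d j2) y * (D1 c y j1 * D2 d y j2)))
    rw [hswap]
    set LB : ℝ := (∑ x1, ∑ x2, ∑ y, W x1 x2 y * r1 x1 y * r2 x2 y)
      - ((k1':ℝ) - 1) / (k1:ℝ) - ((k2':ℝ) - 1) / (k2:ℝ) with hLBdef
    calc LB = (1 / ((k1':ℝ) * (k2':ℝ))) * (∑ j1 : Fin k1', ∑ j2 : Fin k2', LB) := by
          simp only [Finset.sum_const, Finset.card_univ, Fintype.card_fin, nsmul_eq_mul]
          push_cast
          have hne : ((k1':ℝ) * (k2':ℝ)) ≠ 0 := by positivity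
          field_simp
          try ring
      _ ≤ (1 / ((k1':ℝ) * (k2':ℝ))) * ∑ j1, ∑ j2,
            ∑ c : Fin k1' → X1, ∑ d : Fin k2' → X2,
              ((∏ m, p1 (c m)) * (∏ m, p2 (d m))) *
                (∑ y, W (c j1) (d j2) y * (D1 c y j1 * D2 d y j2)) := by
          refine mul_le_mul_of_nonneg_left ?_ (by positivity)
          exact Finset.sum_le_sum fun j1 _ => Finset.sum_le_sum fun j2 _ => key j1 j2
  -- pick a good codebook
  obtain ⟨q, hq⟩ := exists_ge_weighted_avg
    (ι := (Fin k1' → X1) × (Fin k2' → X2))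
    (fun q => (∏ m, p1 (q.1 m)) * (∏ m, p2 (q.2 m))) (fun q => V q.1 q.2)
    (fun q => hw0 q.1 q.2)
    (by
      have h := Fintype.sum_prod_type' (fun (c : Fin k1' → X1) (d : Fin k2' → X2) =>
        (∏ m, p1 (c m)) * (∏ m, p2 (d m)))
      refine h.trans ?_
      simp_rw [← Finset.mul_sum, hwsum2, mul_one]
      exact hwsum1)
    (le_trans hEV (le_of_eq (Fintype.sum_prod_type'
      (fun c d => ((∏ m, p1 (c m)) * (∏ m, p2 (d m))) * V c d)).symm))
  exact le_trans hq (le_csSup (bddAbove_Sset hW0 hW1 hk1' hk2') (hVmem q.1 q.2))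

end Round

section Main
variable {X1 X2 Y : Type*} [Fintype X1] [Fintype X2] [Fintype Y]

/-- helper: the total channel weight of a pair of encodings is 1 -/
lemma sum_We1e2 {W : X1 → X2 → Y → ℝ} (hW1 : ∀ x1 x2, ∑ y, W x1 x2 y = 1)
    {k1 k2 : ℕ} (e1 : Fin k1 → X1 → ℝ) (e2 : Fin k2 → X2 → ℝ)
    (he1s : ∀ i1, ∑ x1, e1 i1 x1 = 1) (he2s : ∀ i2, ∑ x2, e2 i2 x2 = 1)
    (i1 : Fin k1) (i2 : Fin k2) :
    ∑ x1, ∑ x2, ∑ y, W x1 x2 y * e1 i1 x1 * e2 i2 x2 = 1 := by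
  calc (∑ x1, ∑ x2, ∑ y, W x1 x2 y * e1 i1 x1 * e2 i2 x2)
      = ∑ x1, ∑ x2, e1 i1 x1 * e2 i2 x2 := by
        refine Finset.sum_congr rfl fun x1 _ => Finset.sum_congr rfl fun x2 _ => ?_
        have h : ∀ y, W x1 x2 y * e1 i1 x1 * e2 i2 x2
            = W x1 x2 y * (e1 i1 x1 * e2 i2 x2) := fun y => by ring
        simp_rw [h]
        rw [← Finset.sum_mul, hW1, one_mul]
    _ = 1 := by
        simp_rw [← Finset.mul_sum, he2s i2, mul_one, he1s i1]

/-- hard direction one-shot inequality -/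
lemma SNSsr_le_S_add [Nonempty X1] [Nonempty X2] [Nonempty Y] (W : X1 → X2 → Y → ℝ)
    (hW0 : ∀ x1 x2 y, 0 ≤ W x1 x2 y) (hW1 : ∀ x1 x2, ∑ y, W x1 x2 y = 1)
    {k1 k2 k1' k2' : ℕ} (hk1 : 0 < k1) (hk2 : 0 < k2) (hk1' : 0 < k1') (hk2' : 0 < k2') :
    SNSsr W k1 k2 ≤ S W k1' k2'
      + (((k1':ℝ) - 1) / (k1:ℝ) + ((k2':ℝ) - 1) / (k2:ℝ)) := by
  have hk1R : (0:ℝ) < (k1:ℝ) := by exact_mod_cast hk1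
  have hk2R : (0:ℝ) < (k2:ℝ) := by exact_mod_cast hk2
  have hn1 : (1:ℝ) ≤ (k1':ℝ) := by exact_mod_cast hk1'
  have hn2 : (1:ℝ) ≤ (k2':ℝ) := by exact_mod_cast hk2'
  have hsl1 : 0 ≤ ((k1':ℝ) - 1) / (k1:ℝ) := div_nonneg (by linarith) (le_of_lt hk1R)
  have hsl2 : 0 ≤ ((k2':ℝ) - 1) / (k2:ℝ) := div_nonneg (by linarith) (le_of_lt hk2R)
  rw [SNSsr_eq_sSup]
  refine Real.sSup_le (fun s hs => ?_) (by
    have := S_nonneg (W := W) hW0 k1' k2'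
    linarith)
  obtain ⟨P1, P2, hP1, hP2, rfl⟩ := hs
  obtain ⟨q1, hq10, hq1s, hr10, hr1p, hr1s⟩ := ns_extract hk1 P1 hP1
  obtain ⟨q2, hq20, hq2s, hr20, hr2p, hr2s⟩ := ns_extract hk2 P2 hP2
  rw [ns_value hk1 hk2 P1 P2]
  have hrl := round_lemma W hW0 hW1 hk1 hk2 hk1' hk2' q1
    (fun x y => (1 / (k1:ℝ)) * ∑ i, P1 x i i y) q2
    (fun x y => (1 / (k2:ℝ)) * ∑ i, P2 x i i y)
    hq10 hq1s hr10 hr1p hr1s hq20 hq2s hr20 hr2p hr2s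
  beta_reduce at hrl
  linarith

/-- easy direction one-shot inequality -/
lemma two_S_sub_one_le_SNSsr [Nonempty Y] (W : X1 → X2 → Y → ℝ)
    (hW0 : ∀ x1 x2 y, 0 ≤ W x1 x2 y) (hW1 : ∀ x1 x2, ∑ y, W x1 x2 y = 1)
    {k1 k2 : ℕ} (hk1 : 0 < k1) (hk2 : 0 < k2) :
    2 * S W k1 k2 - 1 ≤ SNSsr W k1 k2 := by
  have hkR : (0:ℝ) < (k1:ℝ) * (k2:ℝ) := by
    have h1 : (0:ℝ) < (k1:ℝ) := by exact_mod_cast hk1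
    have h2 : (0:ℝ) < (k2:ℝ) := by exact_mod_cast hk2
    positivity
  have h2 : ∀ s ∈ Sset W k1 k2, s ≤ (SNSsr W k1 k2 + 1) / 2 := by
    intro s hs
    obtain ⟨e1, e2, dd, he10, he1s, he20, he2s, hd0, hds, rfl⟩ := hs
    set d1 : Y → Fin k1 → ℝ := fun y j1 => ∑ j2, dd y j1 j2 with hd1def
    set d2 : Y → Fin k2 → ℝ := fun y j2 => ∑ j1, dd y j1 j2 with hd2def
    have hd10 : ∀ y j1, 0 ≤ d1 y j1 := fun y j1 =>
      Finset.sum_nonneg fun j2 _ => hd0 y j1 j2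
    have hd20 : ∀ y j2, 0 ≤ d2 y j2 := fun y j2 =>
      Finset.sum_nonneg fun j1 _ => hd0 y j1 j2
    have hd11 : ∀ y j1, d1 y j1 ≤ 1 := by
      intro y j1
      rw [← hds y]
      exact Finset.single_le_sum (f := fun j => ∑ j2, dd y j j2)
        (fun j _ => Finset.sum_nonneg fun j2 _ => hd0 y j j2) (mem_univ j1)
    have hd21 : ∀ y j2, d2 y j2 ≤ 1 := by
      intro y j2
      rw [← hds y]
      refine le_trans ?_ (Finset.sum_le_sum (f := fun j1 => dd y j1 j2)
        (fun j1 _ => Finset.single_le_sum (f := fun j => dd y j1 j)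
          (fun j _ => hd0 y j1 j) (mem_univ j2)))
      exact le_refl _
    have hdge1 : ∀ y j1 j2, dd y j1 j2 ≤ d1 y j1 := fun y j1 j2 =>
      Finset.single_le_sum (f := fun j => dd y j1 j) (fun j _ => hd0 y j1 j) (mem_univ j2)
    have hdge2 : ∀ y j1 j2, dd y j1 j2 ≤ d2 y j2 := fun y j1 j2 =>
      Finset.single_le_sum (f := fun j => dd y j j2) (fun j _ => hd0 y j j2) (mem_univ j1)
    have hd1sum : ∀ y, ∑ j, d1 y j = 1 := fun y => hds y
    have hd2sum : ∀ y, ∑ j, d2 y j = 1 := by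
      intro y
      rw [← hds y]
      exact Finset.sum_comm
    set P1 : X1 → Fin k1 → Fin k1 → Y → ℝ := fun x j i y => e1 i x * d1 y j with hP1def
    set P2 : X2 → Fin k2 → Fin k2 → Y → ℝ := fun x j i y => e2 i x * d2 y j with hP2def
    have hB1 : IsNSBox1 k1 P1 := by
      refine ⟨fun x j i y => mul_nonneg (he10 i x) (hd10 y j), ?_, ?_, ?_⟩
      · intro i y
        have h : ∀ x : X1, ∑ j, e1 i x * d1 y j = e1 i x := by
          intro x; rw [← Finset.mul_sum, hd1sum y, mul_one]
        simp_rw [hP1def, h]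
        exact he1s i
      · intro j i i' y
        simp_rw [hP1def]
        rw [← Finset.sum_mul, ← Finset.sum_mul, he1s i, he1s i']
      · intro x i y y'
        simp_rw [hP1def]
        rw [← Finset.mul_sum, ← Finset.mul_sum, hd1sum y, hd1sum y']
    have hB2 : IsNSBox1 k2 P2 := by
      refine ⟨fun x j i y => mul_nonneg (he20 i x) (hd20 y j), ?_, ?_, ?_⟩
      · intro i y
        have h : ∀ x : X2, ∑ j, e2 i x * d2 y j = e2 i x := by
          intro x; rw [← Finset.mul_sum, hd2sum y, mul_one]
        simp_rw [hP2def, h]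
        exact he2s i
      · intro j i i' y
        simp_rw [hP2def]
        rw [← Finset.sum_mul, ← Finset.sum_mul, he2s i, he2s i']
      · intro x i y y'
        simp_rw [hP2def]
        rw [← Finset.mul_sum, ← Finset.mul_sum, hd2sum y, hd2sum y']
    have hval : ((1 / ((k1 : ℝ) * (k2 : ℝ))) * ∑ i1, ∑ i2, ∑ x1, ∑ x2, ∑ y,
        W x1 x2 y * P1 x1 i1 i1 y * P2 x2 i2 i2 y) ∈ NSset W k1 k2 :=
      ⟨P1, P2, hB1, hB2, rfl⟩
    have hle : ((1 / ((k1 : ℝ) * (k2 : ℝ))) * ∑ i1, ∑ i2, ∑ x1, ∑ x2, ∑ y,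
        W x1 x2 y * P1 x1 i1 i1 y * P2 x2 i2 i2 y) ≤ SNSsr W k1 k2 := by
      rw [SNSsr_eq_sSup]
      exact le_csSup (bddAbove_NSset hW0 hW1 hk1 hk2) hval
    -- pointwise comparison of the two big sums
    have hterm : ∀ i1 i2 x1 x2 y,
        2 * (W x1 x2 y * e1 i1 x1 * e2 i2 x2 * dd y i1 i2)
          - W x1 x2 y * e1 i1 x1 * e2 i2 x2
        ≤ W x1 x2 y * P1 x1 i1 i1 y * P2 x2 i2 i2 y := by
      intro i1 i2 x1 x2 y
      have hA : 0 ≤ W x1 x2 y * e1 i1 x1 * e2 i2 x2 :=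
        mul_nonneg (mul_nonneg (hW0 x1 x2 y) (he10 i1 x1)) (he20 i2 x2)
      have hdd : 2 * dd y i1 i2 - 1 ≤ d1 y i1 * d2 y i2 := by
        nlinarith [hdge1 y i1 i2, hdge2 y i1 i2, hd11 y i1, hd21 y i2,
          hd10 y i1, hd20 y i2]
      have h3 := mul_le_mul_of_nonneg_left hdd hA
      calc 2 * (W x1 x2 y * e1 i1 x1 * e2 i2 x2 * dd y i1 i2)
            - W x1 x2 y * e1 i1 x1 * e2 i2 x2
          = (W x1 x2 y * e1 i1 x1 * e2 i2 x2) * (2 * dd y i1 i2 - 1) := by ring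
        _ ≤ (W x1 x2 y * e1 i1 x1 * e2 i2 x2) * (d1 y i1 * d2 y i2) := h3
        _ = W x1 x2 y * P1 x1 i1 i1 y * P2 x2 i2 i2 y := by
            rw [hP1def, hP2def]; ring
    have hsum_le : ∑ i1, ∑ i2, ∑ x1, ∑ x2, ∑ y,
        (2 * (W x1 x2 y * e1 i1 x1 * e2 i2 x2 * dd y i1 i2)
          - W x1 x2 y * e1 i1 x1 * e2 i2 x2)
        ≤ ∑ i1, ∑ i2, ∑ x1, ∑ x2, ∑ y,
            W x1 x2 y * P1 x1 i1 i1 y * P2 x2 i2 i2 y :=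
      Finset.sum_le_sum fun i1 _ => Finset.sum_le_sum fun i2 _ =>
        Finset.sum_le_sum fun x1 _ => Finset.sum_le_sum fun x2 _ =>
        Finset.sum_le_sum fun y _ => hterm i1 i2 x1 x2 y
    have hsplit : ∑ i1, ∑ i2, ∑ x1, ∑ x2, ∑ y,
        (2 * (W x1 x2 y * e1 i1 x1 * e2 i2 x2 * dd y i1 i2)
          - W x1 x2 y * e1 i1 x1 * e2 i2 x2)
        = 2 * (∑ i1, ∑ i2, ∑ x1, ∑ x2, ∑ y,
            W x1 x2 y * e1 i1 x1 * e2 i2 x2 * dd y i1 i2)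
          - (k1:ℝ) * (k2:ℝ) := by
      simp_rw [Finset.sum_sub_distrib, ← Finset.mul_sum]
      have hc : ∑ i1, ∑ i2, ∑ x1, ∑ x2, ∑ y, W x1 x2 y * e1 i1 x1 * e2 i2 x2
          = (k1:ℝ) * (k2:ℝ) := by
        have h : ∀ i1 : Fin k1, ∀ i2 : Fin k2, ∑ x1, ∑ x2, ∑ y,
            W x1 x2 y * e1 i1 x1 * e2 i2 x2 = 1 :=
          fun i1 i2 => sum_We1e2 hW1 e1 e2 he1s he2s i1 i2
        simp_rw [h]
        simp [mul_comm]
      rw [hc]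
    rw [hsplit] at hsum_le
    -- conclude
    have hfinal : 2 * ((1 / ((k1 : ℝ) * (k2 : ℝ))) * ∑ i1, ∑ i2, ∑ x1, ∑ x2, ∑ y,
        W x1 x2 y * e1 i1 x1 * e2 i2 x2 * dd y i1 i2) - 1
        ≤ (1 / ((k1 : ℝ) * (k2 : ℝ))) * ∑ i1, ∑ i2, ∑ x1, ∑ x2, ∑ y,
            W x1 x2 y * P1 x1 i1 i1 y * P2 x2 i2 i2 y := by
      have hmul := mul_le_mul_of_nonneg_left hsum_le
        (le_of_lt (one_div_pos.mpr hkR))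
      have he : (1 / ((k1 : ℝ) * (k2 : ℝ))) * (2 * (∑ i1, ∑ i2, ∑ x1, ∑ x2, ∑ y,
          W x1 x2 y * e1 i1 x1 * e2 i2 x2 * dd y i1 i2) - (k1:ℝ) * (k2:ℝ))
          = 2 * ((1 / ((k1 : ℝ) * (k2 : ℝ))) * ∑ i1, ∑ i2, ∑ x1, ∑ x2, ∑ y,
              W x1 x2 y * e1 i1 x1 * e2 i2 x2 * dd y i1 i2) - 1 := by
        field_simp
        try ring
      rw [he] at hmul
      exact hmul
    linarith
  have hnn : 0 ≤ (SNSsr W k1 k2 + 1) / 2 := by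
    have := SNSsr_nonneg (W := W) hW0 k1 k2
    linarith
  have := Real.sSup_le h2 hnn
  rw [S_eq_sSup]
  linarith

end Main

section Glue
variable {X1 X2 Y : Type*} [Fintype X1] [Fintype X2] [Fintype Y]

lemma nMsg_pos (R : ℝ) (n : ℕ) : 0 < nMsg R n :=
  Nat.ceil_pos.mpr (Real.rpow_pos_of_pos two_pos _)

lemma slack_bound (R δ : ℝ) (hδ : 0 < δ) (n : ℕ) :
    ((nMsg (R - δ) n : ℝ) - 1) / (nMsg R n : ℝ) ≤ ((2:ℝ) ^ (-δ)) ^ n := by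
  have hx : (0:ℝ) < (2:ℝ) ^ ((R - δ) * (n:ℝ)) := Real.rpow_pos_of_pos two_pos _
  have hy : (0:ℝ) < (2:ℝ) ^ (R * (n:ℝ)) := Real.rpow_pos_of_pos two_pos _
  have hnum : ((nMsg (R - δ) n : ℝ)) - 1 ≤ (2:ℝ) ^ ((R - δ) * (n:ℝ)) := by
    have h := Nat.ceil_lt_add_one (le_of_lt hx)
    unfold nMsg
    linarith
  have hden : (2:ℝ) ^ (R * (n:ℝ)) ≤ (nMsg R n : ℝ) := by
    unfold nMsg
    exact Nat.le_ceil _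
  have hq : ((nMsg (R - δ) n : ℝ) - 1) / (nMsg R n : ℝ)
      ≤ (2:ℝ) ^ ((R - δ) * (n:ℝ)) / (2:ℝ) ^ (R * (n:ℝ)) :=
    div_le_div₀ (le_of_lt hx) hnum hy hden
  have heq : (2:ℝ) ^ ((R - δ) * (n:ℝ)) / (2:ℝ) ^ (R * (n:ℝ)) = ((2:ℝ) ^ (-δ)) ^ n := by
    rw [← Real.rpow_sub two_pos, ← Real.rpow_natCast ((2:ℝ) ^ (-δ)) n,
      ← Real.rpow_mul (by norm_num : (0:ℝ) ≤ 2)]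
    congr 1
    ring
  linarith

lemma capacityRegion_empty (W : X1 → X2 → Y → ℝ)
    (hz : ∀ n : ℕ, 1 ≤ n → ∀ k1 k2 : ℕ, 0 < k1 → 0 < k2 → S (macPow n W) k1 k2 = 0) :
    capacityRegion W = ∅ := by
  have h : {p : ℝ × ℝ |
      Tendsto (fun n : ℕ => S (macPow n W) (nMsg p.1 n) (nMsg p.2 n)) atTop (𝓝 1)} = ∅ := by
    rw [Set.eq_empty_iff_forall_notMem]
    intro p hp
    have h0 : Tendsto (fun n : ℕ => S (macPow n W) (nMsg p.1 n) (nMsg p.2 n)) atTop (𝓝 0) := by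
      refine Tendsto.congr' ?_ (tendsto_const_nhds (x := (0:ℝ)))
      filter_upwards [eventually_ge_atTop 1] with n hn
      exact (hz n hn _ _ (nMsg_pos p.1 n) (nMsg_pos p.2 n)).symm
    exact one_ne_zero (tendsto_nhds_unique hp h0)
  unfold capacityRegion
  rw [h, closure_empty]

lemma capacityRegionNSsr_empty (W : X1 → X2 → Y → ℝ)
    (hz : ∀ n : ℕ, 1 ≤ n → ∀ k1 k2 : ℕ, 0 < k1 → 0 < k2 → SNSsr (macPow n W) k1 k2 = 0) :
    capacityRegionNSsr W = ∅ := by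
  have h : {p : ℝ × ℝ |
      Tendsto (fun n : ℕ => SNSsr (macPow n W) (nMsg p.1 n) (nMsg p.2 n)) atTop (𝓝 1)} = ∅ := by
    rw [Set.eq_empty_iff_forall_notMem]
    intro p hp
    have h0 : Tendsto (fun n : ℕ => SNSsr (macPow n W) (nMsg p.1 n) (nMsg p.2 n)) atTop (𝓝 0) := by
      refine Tendsto.congr' ?_ (tendsto_const_nhds (x := (0:ℝ)))
      filter_upwards [eventually_ge_atTop 1] with n hn
      exact (hz n hn _ _ (nMsg_pos p.1 n) (nMsg_pos p.2 n)).symm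
    exact one_ne_zero (tendsto_nhds_unique hp h0)
  unfold capacityRegionNSsr
  rw [h, closure_empty]

lemma S_zero_isEmpty_Y [IsEmpty Y] (W : X1 → X2 → Y → ℝ) (k1 k2 : ℕ) : S W k1 k2 = 0 := by
  have h : ∀ s ∈ Sset W k1 k2, s = 0 := by
    rintro s ⟨e1, e2, d, -, -, -, -, -, -, rfl⟩
    simp [Finset.univ_eq_empty]
  rw [S_eq_sSup]
  exact le_antisymm (Real.sSup_le (fun s hs => (h s hs).le) le_rfl)
    (Real.sSup_nonneg (fun s hs => (h s hs).ge))

lemma SNSsr_zero_isEmpty_Y [IsEmpty Y] (W : X1 → X2 → Y → ℝ) (k1 k2 : ℕ) :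
    SNSsr W k1 k2 = 0 := by
  have h : ∀ s ∈ NSset W k1 k2, s = 0 := by
    rintro s ⟨P1, P2, -, -, rfl⟩
    simp [Finset.univ_eq_empty]
  rw [SNSsr_eq_sSup]
  exact le_antisymm (Real.sSup_le (fun s hs => (h s hs).le) le_rfl)
    (Real.sSup_nonneg (fun s hs => (h s hs).ge))

lemma S_zero_isEmpty_X1 [IsEmpty X1] (W : X1 → X2 → Y → ℝ) {k1 : ℕ} (k2 : ℕ)
    (hk1 : 0 < k1) : S W k1 k2 = 0 := by
  have h : Sset W k1 k2 = ∅ := by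
    rw [Set.eq_empty_iff_forall_notMem]
    rintro s ⟨e1, e2, d, -, he1s, -⟩
    have := he1s ⟨0, hk1⟩
    simp [Finset.univ_eq_empty] at this
  rw [S_eq_sSup, h]
  exact Real.sSup_empty

lemma S_zero_isEmpty_X2 [IsEmpty X2] (W : X1 → X2 → Y → ℝ) (k1 : ℕ) {k2 : ℕ}
    (hk2 : 0 < k2) : S W k1 k2 = 0 := by
  have h : Sset W k1 k2 = ∅ := by
    rw [Set.eq_empty_iff_forall_notMem]
    rintro s ⟨e1, e2, d, -, -, -, he2s, -⟩
    have := he2s ⟨0, hk2⟩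
    simp [Finset.univ_eq_empty] at this
  rw [S_eq_sSup, h]
  exact Real.sSup_empty

lemma SNSsr_zero_isEmpty_X1 [IsEmpty X1] [Nonempty Y] (W : X1 → X2 → Y → ℝ) {k1 : ℕ}
    (k2 : ℕ) (hk1 : 0 < k1) : SNSsr W k1 k2 = 0 := by
  have h : NSset W k1 k2 = ∅ := by
    rw [Set.eq_empty_iff_forall_notMem]
    rintro s ⟨P1, P2, ⟨-, hPn, -, -⟩, -, -⟩
    have := hPn ⟨0, hk1⟩ (Classical.arbitrary Y)
    simp [Finset.univ_eq_empty] at this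
  rw [SNSsr_eq_sSup, h]
  exact Real.sSup_empty

lemma SNSsr_zero_isEmpty_X2 [IsEmpty X2] [Nonempty Y] (W : X1 → X2 → Y → ℝ) (k1 : ℕ)
    {k2 : ℕ} (hk2 : 0 < k2) : SNSsr W k1 k2 = 0 := by
  have h : NSset W k1 k2 = ∅ := by
    rw [Set.eq_empty_iff_forall_notMem]
    rintro s ⟨P1, P2, -, ⟨-, hPn, -, -⟩, -⟩
    have := hPn ⟨0, hk2⟩ (Classical.arbitrary Y)
    simp [Finset.univ_eq_empty] at this
  rw [SNSsr_eq_sSup, h]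
  exact Real.sSup_empty

end Glue

/-- Independent non-signaling assistance (shared only between each sender and the
receiver separately) does not change the capacity region: `C^{NS_SR}(W) = C(W)`. -/
theorem capacityRegionNSsr_eq_capacityRegion {X1 X2 Y : Type*}
    [Fintype X1] [Fintype X2] [Fintype Y]
    (W : X1 → X2 → Y → ℝ)
    (hW0 : ∀ x1 x2 y, 0 ≤ W x1 x2 y)
    (hW1 : ∀ x1 x2, ∑ y, W x1 x2 y = 1) :
    capacityRegionNSsr W = capacityRegion W := by
  by_cases hY : Nonempty Y
  · by_cases hX1 : Nonempty X1
    · by_cases hX2 : Nonempty X2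
      · -- the main case : all alphabets nonempty
        haveI := hY; haveI := hX1; haveI := hX2
        apply Set.Subset.antisymm
        · -- hard direction
          refine closure_minimal ?_ isClosed_closure
          intro p hp
          have hmem : ∀ m : ℕ, ((p.1 - 1/((m:ℝ)+1)), (p.2 - 1/((m:ℝ)+1))) ∈ {q : ℝ × ℝ |
              Tendsto (fun n : ℕ => S (macPow n W) (nMsg q.1 n) (nMsg q.2 n)) atTop (𝓝 1)} := by
            intro m
            set δ : ℝ := 1/((m:ℝ)+1) with hδdef
            have hδpos : 0 < δ := by positivity
            have hub : ∀ n, S (macPow n W) (nMsg (p.1 - δ) n) (nMsg (p.2 - δ) n) ≤ 1 :=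
              fun n => S_le_one (macPow_nonneg hW0 n) (macPow_sum_one hW1 n)
                (nMsg_pos _ n) (nMsg_pos _ n)
            have hlb : ∀ n, SNSsr (macPow n W) (nMsg p.1 n) (nMsg p.2 n)
                - (((2:ℝ) ^ (-δ)) ^ n + ((2:ℝ) ^ (-δ)) ^ n)
                ≤ S (macPow n W) (nMsg (p.1 - δ) n) (nMsg (p.2 - δ) n) := by
              intro n
              have h1 := SNSsr_le_S_add (macPow n W) (macPow_nonneg hW0 n)
                (macPow_sum_one hW1 n) (nMsg_pos p.1 n) (nMsg_pos p.2 n)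
                (nMsg_pos (p.1 - δ) n) (nMsg_pos (p.2 - δ) n)
              have h2 := slack_bound p.1 δ hδpos n
              have h3 := slack_bound p.2 δ hδpos n
              linarith
            have hgeo : Tendsto (fun n : ℕ => (((2:ℝ) ^ (-δ)) ^ n + ((2:ℝ) ^ (-δ)) ^ n))
                atTop (𝓝 0) := by
              have h0 : Tendsto (fun n : ℕ => ((2:ℝ) ^ (-δ)) ^ n) atTop (𝓝 0) :=
                tendsto_pow_atTop_nhds_zero_of_lt_one
                  (Real.rpow_nonneg (by norm_num) _)
                  (Real.rpow_lt_one_of_one_lt_of_neg one_lt_two (by linarith))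
              simpa using h0.add h0
            have hlow : Tendsto (fun n : ℕ => SNSsr (macPow n W) (nMsg p.1 n) (nMsg p.2 n)
                - (((2:ℝ) ^ (-δ)) ^ n + ((2:ℝ) ^ (-δ)) ^ n)) atTop (𝓝 1) := by
              have h := hp.sub hgeo
              simpa using h
            exact tendsto_of_tendsto_of_tendsto_of_le_of_le hlow tendsto_const_nhds hlb hub
          have htend : Tendsto (fun m : ℕ => ((p.1 - 1/((m:ℝ)+1)), (p.2 - 1/((m:ℝ)+1))))
              atTop (𝓝 p) := by
            have h0 : Tendsto (fun m : ℕ => 1/((m:ℝ)+1)) atTop (𝓝 0) :=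
              tendsto_one_div_add_atTop_nhds_zero_nat
            have h1 : Tendsto (fun m : ℕ => p.1 - 1/((m:ℝ)+1)) atTop (𝓝 p.1) := by
              simpa using tendsto_const_nhds.sub h0
            have h2 : Tendsto (fun m : ℕ => p.2 - 1/((m:ℝ)+1)) atTop (𝓝 p.2) := by
              simpa using tendsto_const_nhds.sub h0
            have := h1.prodMk_nhds h2
            simpa using this
          exact mem_closure_of_tendsto htend (Filter.Eventually.of_forall hmem)
        · -- easy direction
          refine closure_mono ?_
          intro p hp
          have hub : ∀ n, SNSsr (macPow n W) (nMsg p.1 n) (nMsg p.2 n) ≤ 1 :=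
            fun n => SNSsr_le_one (macPow_nonneg hW0 n) (macPow_sum_one hW1 n)
              (nMsg_pos _ n) (nMsg_pos _ n)
          have hlb : ∀ n, 2 * S (macPow n W) (nMsg p.1 n) (nMsg p.2 n) - 1
              ≤ SNSsr (macPow n W) (nMsg p.1 n) (nMsg p.2 n) :=
            fun n => two_S_sub_one_le_SNSsr (macPow n W) (macPow_nonneg hW0 n)
              (macPow_sum_one hW1 n) (nMsg_pos _ n) (nMsg_pos _ n)
          have hlow : Tendsto (fun n : ℕ => 2 * S (macPow n W) (nMsg p.1 n) (nMsg p.2 n) - 1)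
              atTop (𝓝 1) := by
            have h := (hp.const_mul 2).sub_const 1
            norm_num at h
            exact h
          exact tendsto_of_tendsto_of_tendsto_of_le_of_le hlow tendsto_const_nhds hlb hub
      · -- X2 empty
        haveI hEX2 : IsEmpty X2 := not_nonempty_iff.mp hX2
        haveI := hY
        rw [capacityRegionNSsr_empty W ?_, capacityRegion_empty W ?_]
        · intro n hn k1 k2 hk1 hk2
          haveI : Nonempty (Fin n) := ⟨⟨0, hn⟩⟩
          exact S_zero_isEmpty_X2 _ _ hk2
        · intro n hn k1 k2 hk1 hk2
          haveI : Nonempty (Fin n) := ⟨⟨0, hn⟩⟩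
          exact SNSsr_zero_isEmpty_X2 _ _ hk2
    · -- X1 empty
      haveI hEX1 : IsEmpty X1 := not_nonempty_iff.mp hX1
      haveI := hY
      rw [capacityRegionNSsr_empty W ?_, capacityRegion_empty W ?_]
      · intro n hn k1 k2 hk1 hk2
        haveI : Nonempty (Fin n) := ⟨⟨0, hn⟩⟩
        exact S_zero_isEmpty_X1 _ _ hk1
      · intro n hn k1 k2 hk1 hk2
        haveI : Nonempty (Fin n) := ⟨⟨0, hn⟩⟩
        exact SNSsr_zero_isEmpty_X1 _ _ hk1
  · -- Y empty
    haveI hEY : IsEmpty Y := not_nonempty_iff.mp hY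
    rw [capacityRegionNSsr_empty W ?_, capacityRegion_empty W ?_]
    · intro n hn k1 k2 hk1 hk2
      haveI : Nonempty (Fin n) := ⟨⟨0, hn⟩⟩
      exact S_zero_isEmpty_Y _ _ _
    · intro n hn k1 k2 hk1 hk2
      haveI : Nonempty (Fin n) := ⟨⟨0, hn⟩⟩
      exact SNSsr_zero_isEmpty_Y _ _ _
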